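/- arXiv:0812.0708 — 6 statements merged into one kernel-verified Lean document; each statement's English description precedes it below -/
import Mathlib

section
/- Let n ≥ 1 be an integer and let b, c ∈ ℝ with c ∉ {0, −1, …, −(n−1)}. Then every zero z₀ ∈ ℂ of the hypergeometric polynomial F(−n, b; c; z) with z₀ ≠ 0 and z₀ ≠ 1 is simple (has multiplicity one). In particular, multiple zeros of F(−n, b; c; z) can only occur at z = 0 or z = 1. -/
open Polynomial
open scoped Classical

/-- The hypergeometric polynomial `F(-n, b; c; z) = ∑_{k=0}^n ((-n)_k (b)_k / ((c)_k k!)) z^k`,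
viewed as a polynomial over `ℂ` (with real parameters `b`, `c`). -/
noncomputable def hypPoly (n : ℕ) (b c : ℝ) : Polynomial ℂ :=
  ∑ k ∈ Finset.range (n + 1),
    Polynomial.C ((((((ascPochhammer ℝ k).eval (-(n : ℝ))) * ((ascPochhammer ℝ k).eval b)) /
      (((ascPochhammer ℝ k).eval c) * (Nat.factorial k : ℝ))) : ℝ) : ℂ) * Polynomial.X ^ k

/-- Number of zeros of `p`, counted with multiplicity, lying in the set `S ⊆ ℂ`. -/
noncomputable def countIn (p : Polynomial ℂ) (S : Set ℂ) : ℕ :=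
  Multiset.card (p.roots.filter (fun z => z ∈ S))

/-- The real coefficient sequence of the hypergeometric polynomial. -/
noncomputable def hypA (n : ℕ) (b c : ℝ) (k : ℕ) : ℝ :=
  (((ascPochhammer ℝ k).eval (-(n : ℝ))) * ((ascPochhammer ℝ k).eval b)) /
      (((ascPochhammer ℝ k).eval c) * (Nat.factorial k : ℝ))

lemma hypA_zero (n : ℕ) (b c : ℝ) : hypA n b c 0 = 1 := by
  simp [hypA]

lemma hypA_eq_zero_of_lt (n : ℕ) (b c : ℝ) {k : ℕ} (hk : n < k) : hypA n b c k = 0 := by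
  have : (ascPochhammer ℝ k).eval (-(n : ℝ)) = 0 := by
    rw [ascPochhammer_eval_eq_zero_iff]
    exact ⟨n, hk, by push_cast; ring⟩
  simp [hypA, this]

lemma hypPoly_coeff (n : ℕ) (b c : ℝ) (k : ℕ) :
    (hypPoly n b c).coeff k = ((hypA n b c k : ℝ) : ℂ) := by
  rw [hypPoly, Polynomial.finset_sum_coeff]
  simp only [Polynomial.coeff_C_mul, Polynomial.coeff_X_pow, mul_ite, mul_one, mul_zero]
  rw [Finset.sum_ite_eq (Finset.range (n + 1)) k]
  by_cases hk : k ∈ Finset.range (n + 1)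
  · simp [hk, hypA]
  · have hk' : n < k := by simpa using Nat.lt_of_succ_le (not_lt.mp (by simpa using hk))
    simp [hk, hypA_eq_zero_of_lt n b c hk']

/-- The key coefficient recurrence, over ℝ. -/
lemma hypA_rec (n : ℕ) (b c : ℝ) (hc : ∀ k : ℕ, k < n → c ≠ -(k : ℝ)) (k : ℕ) :
    ((k : ℝ) + 1) * (c + k) * hypA n b c (k + 1)
      = ((k : ℝ) - n) * (b + k) * hypA n b c k := by
  rcases lt_or_ge k n with hk | hk
  · have hck : (ascPochhammer ℝ k).eval c ≠ 0 := by
      rw [Ne, ascPochhammer_eval_eq_zero_iff]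
      rintro ⟨j, hj, hje⟩
      exact hc j (hj.trans_le hk.le) (by linarith [hje])
    have hck2 : c + (k : ℝ) ≠ 0 := by
      intro h
      exact hc k hk (by linarith)
    have hfac : (Nat.factorial k : ℝ) ≠ 0 := by positivity
    have hk1 : ((k : ℝ) + 1) ≠ 0 := by positivity
    rw [hypA, hypA, ascPochhammer_succ_eval, ascPochhammer_succ_eval, ascPochhammer_succ_eval,
      Nat.factorial_succ]
    push_cast
    field_simp
    ring
  · have h1 : hypA n b c (k + 1) = 0 := hypA_eq_zero_of_lt n b c (by omega)
    rcases eq_or_lt_of_le hk with rfl | hk'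
    · simp [h1]
    · simp [h1, hypA_eq_zero_of_lt n b c hk']

/-- The coefficient recurrence, cast to ℂ. -/
lemma hypA_rec' (n : ℕ) (b c : ℝ) (hc : ∀ k : ℕ, k < n → c ≠ -(k : ℝ)) (k : ℕ) :
    ((k : ℂ) + 1) * ((c : ℂ) + k) * ((hypA n b c (k + 1) : ℝ) : ℂ)
      = ((k : ℂ) - n) * ((b : ℂ) + k) * ((hypA n b c k : ℝ) : ℂ) := by
  have := hypA_rec n b c hc k
  have := congrArg (fun x : ℝ => (x : ℂ)) this
  push_cast at this ⊢
  convert this using 2 <;> push_cast <;> ring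

/-- The hypergeometric differential equation, as a polynomial identity. -/
lemma hypPoly_ode (n : ℕ) (b c : ℝ) (hc : ∀ k : ℕ, k < n → c ≠ -(k : ℝ)) :
    X * derivative (derivative (hypPoly n b c))
      - X * (X * derivative (derivative (hypPoly n b c)))
      + C (c : ℂ) * derivative (hypPoly n b c)
      - C ((b : ℂ) + 1 - n) * (X * derivative (hypPoly n b c))
      + C ((n : ℂ) * b) * hypPoly n b c = 0 := by
  set F := hypPoly n b c with hF
  have hco : ∀ k, F.coeff k = ((hypA n b c k : ℝ) : ℂ) := hypPoly_coeff n b c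
  ext k
  match k with
  | 0 =>
    simp only [Polynomial.coeff_add, Polynomial.coeff_sub, Polynomial.mul_coeff_zero,
      Polynomial.coeff_X_zero, Polynomial.coeff_C_mul, Polynomial.coeff_derivative,
      Polynomial.coeff_zero, zero_mul, Polynomial.coeff_C_zero, hco]
    have := hypA_rec' n b c hc 0
    push_cast at this ⊢
    linear_combination this
  | 1 =>
    simp only [Polynomial.coeff_add, Polynomial.coeff_sub, Polynomial.coeff_X_mul,
      Polynomial.coeff_C_mul, Polynomial.coeff_derivative, Polynomial.coeff_zero,
      Polynomial.mul_coeff_zero, Polynomial.coeff_X_zero, zero_mul,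
      Polynomial.coeff_C_zero, hco]
    have := hypA_rec' n b c hc 1
    push_cast at this ⊢
    linear_combination this
  | (i + 2) =>
    have e1 : (X * (X * derivative (derivative F))).coeff (i + 2)
        = (derivative (derivative F)).coeff i := by
      rw [Polynomial.coeff_X_mul, Polynomial.coeff_X_mul]
    simp only [Polynomial.coeff_add, Polynomial.coeff_sub, Polynomial.coeff_X_mul, e1,
      Polynomial.coeff_C_mul, Polynomial.coeff_derivative, Polynomial.coeff_zero,
      Polynomial.coeff_C_zero, hco]
    have h1 := hypA_rec' n b c hc (i + 2)
    push_cast at h1 ⊢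
    linear_combination h1

lemma hypPoly_ne_zero (n : ℕ) (b c : ℝ) : hypPoly n b c ≠ 0 := by
  intro h
  have := hypPoly_coeff n b c 0
  rw [h, hypA_zero] at this
  simp at this

set_option maxHeartbeats 1000000 in
/-- Every zero of `F(-n, b; c; z)` other than `0` and `1` is simple. -/
theorem hypPoly_zero_ne_zero_one_simple (n : ℕ) (hn : 1 ≤ n) (b c : ℝ)
    (hc : ∀ k : ℕ, k < n → c ≠ -(k : ℝ))
    (z₀ : ℂ) (hz₀ : z₀ ≠ 0) (hz₁ : z₀ ≠ 1)
    (hroot : (hypPoly n b c).IsRoot z₀) :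
    (hypPoly n b c).rootMultiplicity z₀ = 1 := by
  set F := hypPoly n b c with hF
  have hF0 : F ≠ 0 := hypPoly_ne_zero n b c
  set m := F.rootMultiplicity z₀ with hm
  clear_value m
  have hm1 : 1 ≤ m := by rw [hm]; exact (Polynomial.rootMultiplicity_pos hF0).mpr hroot
  by_contra hne
  have hm2 : 2 ≤ m := by omega
  -- derivative facts
  have hd1 : (derivative F).rootMultiplicity z₀ = m - 1 := by
    rw [hm]; exact Polynomial.derivative_rootMultiplicity_of_root hroot
  have hd1ne : derivative F ≠ 0 := by
    intro h
    rw [h, Polynomial.rootMultiplicity_zero] at hd1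
    omega
  have hd1root : (derivative F).IsRoot z₀ := by
    have := (Polynomial.rootMultiplicity_pos hd1ne (x := z₀)).mp (by omega)
    exact this
  have hd2 : (derivative (derivative F)).rootMultiplicity z₀ = m - 2 := by
    rw [Polynomial.derivative_rootMultiplicity_of_root hd1root, hd1, Nat.sub_sub]
  have hd2ne : derivative (derivative F) ≠ 0 := by
    intro h
    have h0 : (derivative F).natDegree = 0 :=
      Polynomial.natDegree_eq_zero_of_derivative_eq_zero h
    have hdvd : (X - C z₀) ^ (m - 1) ∣ derivative F := by
      rw [← hd1]; exact Polynomial.pow_rootMultiplicity_dvd _ _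
    have := Polynomial.natDegree_le_of_dvd hdvd hd1ne
    rw [Polynomial.natDegree_pow, Polynomial.natDegree_X_sub_C, h0] at this
    omega
  -- the ODE
  have hode := hypPoly_ode n b c hc
  -- LHS of the rearranged ODE
  set G := X * (1 - X) * derivative (derivative F) with hG
  have hGeq : G = - (C (c : ℂ) * derivative F
      - C ((b : ℂ) + 1 - n) * (X * derivative F) + C ((n : ℂ) * b) * F) := by
    have : X * derivative (derivative F) - X * (X * derivative (derivative F))
        = X * (1 - X) * derivative (derivative F) := by ring
    rw [hG, ← this]
    linear_combination hode
  have hGne : G ≠ 0 := by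
    rw [hG]
    refine mul_ne_zero (mul_ne_zero Polynomial.X_ne_zero ?_) hd2ne
    intro h
    have := congrArg (Polynomial.eval 0) h
    simp at this
  -- rootMultiplicity of G at z₀ is m - 2
  have hmultG : G.rootMultiplicity z₀ = m - 2 := by
    rw [hG, Polynomial.rootMultiplicity_mul (by rw [← hG]; exact hGne),
      Polynomial.rootMultiplicity_mul
        (mul_ne_zero Polynomial.X_ne_zero (by
          intro h
          have := congrArg (Polynomial.eval 0) h
          simp at this)), hd2]
    have h1 : Polynomial.rootMultiplicity z₀ (X : ℂ[X]) = 0 :=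
      Polynomial.rootMultiplicity_eq_zero (by simpa [Polynomial.IsRoot] using hz₀)
    have h2 : Polynomial.rootMultiplicity z₀ ((1 : ℂ[X]) - X) = 0 :=
      Polynomial.rootMultiplicity_eq_zero (by
        simp only [Polynomial.IsRoot, Polynomial.eval_sub, Polynomial.eval_one,
          Polynomial.eval_X, sub_eq_zero]
        exact fun h => hz₁ h.symm)
    rw [h1, h2]
    omega
  -- but (X - z₀)^(m-1) divides G via the ODE
  have hdvdF : (X - C z₀) ^ (m - 1) ∣ F := by
    calc (X - C z₀) ^ (m - 1) ∣ (X - C z₀) ^ m := pow_dvd_pow _ (by omega)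
      _ ∣ F := by rw [hm]; exact Polynomial.pow_rootMultiplicity_dvd _ _
  have hdvdF' : (X - C z₀) ^ (m - 1) ∣ derivative F := by
    rw [← hd1]; exact Polynomial.pow_rootMultiplicity_dvd _ _
  have hdvdG : (X - C z₀) ^ (m - 1) ∣ G := by
    rw [hGeq]
    exact dvd_neg.mpr (dvd_add (dvd_sub (hdvdF'.mul_left _)
      ((hdvdF'.mul_left _).mul_left _)) (hdvdF.mul_left _))
  have := (Polynomial.le_rootMultiplicity_iff hGne (a := z₀) (n := m - 1)).mpr hdvdG
  rw [hmultG] at this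
  omega
end

section
/- Let n ≥ 1 be an integer. For every real b < 1 − n, all n zeros of F(−n, b; 2b; z) are real and greater than 1. Moreover, the zeros converge to the point z = 2 as b → −∞: for every ε > 0 there exists B ∈ ℝ such that for all b < B, every zero z of F(−n, b; 2b; z) satisfies |z − 2| < ε. -/
open Polynomial
open scoped Classical

/-- the ratio `(b)_k / (2b)_k` as a product -/
noncomputable def HG.d (b : ℝ) (k : ℕ) : ℝ := ∏ j ∈ Finset.range k, (b + j) / (2 * b + j)

/-- the real hypergeometric polynomial `F(-n, b; 2b; x)` -/
noncomputable def HG.f (b : ℝ) (n : ℕ) : Polynomial ℝ :=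
  ∑ k ∈ Finset.range (n + 1), C ((-1 : ℝ) ^ k * (n.choose k : ℝ) * HG.d b k) * X ^ k

namespace HG

lemma ascPochhammer_eval_prod (x : ℝ) (k : ℕ) :
    (ascPochhammer ℝ k).eval x = ∏ j ∈ Finset.range k, (x + j) := by
  induction k with
  | zero => simp
  | succ k ih => rw [ascPochhammer_succ_eval, ih, Finset.prod_range_succ]

lemma d_zero (b : ℝ) : d b 0 = 1 := by simp [d]

lemma d_succ (b : ℝ) (k : ℕ) : d b (k + 1) = d b k * ((b + k) / (2 * b + k)) := by
  simp [d, Finset.prod_range_succ, mul_div_mul_comm]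

lemma d_pos {b : ℝ} {k n : ℕ} (hb : b < 1 - n) (hk : k ≤ n) : 0 < d b k := by
  apply Finset.prod_pos
  intro j hj
  rw [Finset.mem_range] at hj
  have hj' : (j : ℝ) ≤ (n : ℝ) - 1 := by
    have : (j : ℝ) + 1 ≤ (k : ℝ) := by exact_mod_cast hj
    have : (k : ℝ) ≤ (n : ℝ) := by exact_mod_cast hk
    nlinarith [ (by exact_mod_cast hj : (j:ℝ) + 1 ≤ (k:ℝ)) ]
  have h1 : b + j < 0 := by nlinarith
  have h2 : 2 * b + j < 0 := by
    have hn1 : (1:ℝ) ≤ (n:ℝ) := by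
      rcases Nat.eq_zero_or_pos n with h | h
      · subst h; simp at hj'; nlinarith [Nat.cast_nonneg (α := ℝ) j]
      · exact_mod_cast h
    nlinarith
  exact div_pos_of_neg_of_neg h1 h2

lemma d_ne_zero {b : ℝ} {k n : ℕ} (hb : b < 1 - n) (hk : k ≤ n) : d b k ≠ 0 :=
  (d_pos hb hk).ne'

end HG

namespace HG

lemma f_coeff (b : ℝ) (n k : ℕ) :
    (f b n).coeff k = (-1 : ℝ) ^ k * (n.choose k : ℝ) * d b k := by
  simp only [f, finset_sum_coeff, coeff_C_mul, coeff_X_pow, mul_ite, mul_one, mul_zero]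
  rw [Finset.sum_ite_eq (Finset.range (n + 1)) k]
  by_cases h : k ∈ Finset.range (n + 1)
  · simp [h]
  · rw [if_neg h]
    rw [Finset.mem_range, not_lt] at h
    rw [Nat.choose_eq_zero_of_lt (by omega)]
    simp

end HG

namespace HG

lemma key' (B J N x1 x2 x3 x4 x5 D E : ℝ)
    (h1 : x1 = x3 + x2) (h2 : x2 = x5 + x4)
    (h3 : N * x5 = x2 * (J + 1)) (h6 : (N + 1) * x3 = x1 * (J + 1))
    (hE : E * (2 * B + J) = D * (B + J)) (hJ : 2 * B + J ≠ 0) :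
    (2 * B + N) * x1 * E =
      (2 * N + 2 * B) * x2 * E + (B + N) * x3 * D - N * x5 * D - N * x4 * E := by
  have hz : ((2 * B + N) * x1 * E -
      ((2 * N + 2 * B) * x2 * E + (B + N) * x3 * D - N * x5 * D - N * x4 * E)) * (2 * B + J)
      = 0 := by
    linear_combination ((2*B+N)*x1 - (2*N+2*B)*x2 + N*x4) * hE
      + D*((N+2*B)*(B+J) - B*(J+1)) * h1 - D*(N*(B+J)) * h2 + D*B*h3 - D*B*h6
  rcases mul_eq_zero.mp hz with h | h
  · linarith [sub_eq_zero.mp h]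
  · exact absurd h hJ

end HG

namespace HG

lemma key (b : ℝ) (m j : ℕ) (hJ : 2 * b + (j : ℝ) ≠ 0) :
    (2 * b + ((m:ℝ) + 1)) * ((m+2).choose (j+1) : ℝ) * d b (j+1) =
      (2 * ((m:ℝ)+1) + 2 * b) * ((m+1).choose (j+1) : ℝ) * d b (j+1)
      + (b + ((m:ℝ)+1)) * ((m+1).choose j : ℝ) * d b j
      - ((m:ℝ)+1) * (m.choose j : ℝ) * d b j
      - ((m:ℝ)+1) * (m.choose (j+1) : ℝ) * d b (j+1) := by
  have h1 : ((m+2).choose (j+1) : ℝ) = ((m+1).choose j : ℝ) + ((m+1).choose (j+1) : ℝ) := by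
    exact_mod_cast Nat.choose_succ_succ (m+1) j
  have h2 : ((m+1).choose (j+1) : ℝ) = (m.choose j : ℝ) + (m.choose (j+1) : ℝ) := by
    exact_mod_cast Nat.choose_succ_succ m j
  have h3 : ((m:ℝ)+1) * (m.choose j : ℝ) = ((m+1).choose (j+1) : ℝ) * ((j:ℝ) + 1) := by
    exact_mod_cast Nat.add_one_mul_choose_eq m j
  have h6 : (((m:ℝ)+1) + 1) * ((m+1).choose j : ℝ) = ((m+2).choose (j+1) : ℝ) * ((j:ℝ) + 1) := by
    exact_mod_cast Nat.add_one_mul_choose_eq (m+1) j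
  have hE : d b (j+1) * (2 * b + (j:ℝ)) = d b j * (b + (j:ℝ)) := by
    rw [d_succ, mul_assoc, div_mul_cancel₀ _ hJ]
  exact key' b (j:ℝ) ((m:ℝ)+1) _ _ _ _ _ _ _ h1 h2 h3 h6 hE hJ

lemma f_rec (b : ℝ) (m : ℕ) (hb : ∀ j : ℕ, j ≤ m + 1 → 2 * b + (j:ℝ) ≠ 0) :
    C (2 * b + ((m:ℝ) + 1)) * f b (m+2) =
      (C (2 * ((m:ℝ)+1) + 2 * b) - C (b + ((m:ℝ)+1)) * X) * f b (m+1)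
      + C ((m:ℝ)+1) * (X - 1) * f b m := by
  have expand : (C (2 * ((m:ℝ)+1) + 2 * b) - C (b + ((m:ℝ)+1)) * X) * f b (m+1)
      + C ((m:ℝ)+1) * (X - 1) * f b m
      = C (2 * ((m:ℝ)+1) + 2 * b) * f b (m+1) - C (b + ((m:ℝ)+1)) * (X * f b (m+1))
        + C ((m:ℝ)+1) * (X * f b m) - C ((m:ℝ)+1) * f b m := by ring
  rw [expand]
  ext k
  rcases k with _ | j
  · simp only [coeff_C_mul, coeff_add, coeff_sub, mul_comm X _, coeff_mul_X_zero, f_coeff,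
      d_zero, Nat.choose_zero_right]
    push_cast
    ring
  · simp only [coeff_C_mul, coeff_add, coeff_sub, coeff_X_mul, f_coeff]
    by_cases hj : j ≤ m + 1
    · have hk := key b m j (hb j hj)
      linear_combination ((-1:ℝ)^(j+1)) * hk
    · push_neg at hj
      rw [Nat.choose_eq_zero_of_lt (by omega), Nat.choose_eq_zero_of_lt (by omega),
        Nat.choose_eq_zero_of_lt (by omega), Nat.choose_eq_zero_of_lt (by omega),
        Nat.choose_eq_zero_of_lt (by omega)]
      simp

end HG

namespace HG

variable {b : ℝ} {N : ℕ}

lemma f_natDegree (hb : b < 1 - N) {n : ℕ} (hn : n ≤ N) : (f b n).natDegree = n := by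
  have hne : (f b n).coeff n ≠ 0 := by
    rw [f_coeff, Nat.choose_self]
    have := d_pos (n := N) hb hn
    positivity
  apply le_antisymm
  · apply Polynomial.natDegree_le_iff_coeff_eq_zero.mpr
    intro k hk
    rw [f_coeff, Nat.choose_eq_zero_of_lt hk]
    simp
  · exact Polynomial.le_natDegree_of_ne_zero hne

lemma f_ne_zero (hb : b < 1 - N) {n : ℕ} (hn : n ≤ N) : f b n ≠ 0 := by
  intro h
  have : (f b n).coeff n ≠ 0 := by
    rw [f_coeff, Nat.choose_self]
    have := d_pos (n := N) hb hn
    positivity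
  rw [h] at this; simp at this

lemma f_leadingCoeff (hb : b < 1 - N) {n : ℕ} (hn : n ≤ N) :
    (f b n).leadingCoeff = (-1:ℝ)^n * d b n := by
  rw [Polynomial.leadingCoeff, f_natDegree hb hn, f_coeff, Nat.choose_self]
  simp

lemma hN_pos (hb : b < 1 - N) (hN : 1 ≤ N) {j : ℕ} (hj : j ≤ N - 1) :
    b + (j:ℝ) < 0 ∧ 2 * b + (j:ℝ) < 0 := by
  have hj' : (j : ℝ) ≤ (N : ℝ) - 1 := by
    have : (j:ℝ) ≤ ((N - 1 : ℕ) : ℝ) := by exact_mod_cast hj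
    have : ((N - 1 : ℕ) : ℝ) = (N:ℝ) - 1 := by
      have : (1:ℕ) ≤ N := hN
      push_cast [Nat.cast_sub this]; ring
    linarith [‹(j:ℝ) ≤ ((N - 1 : ℕ) : ℝ)›, this.le]
  have hN1 : (1:ℝ) ≤ (N:ℝ) := by exact_mod_cast hN
  constructor <;> nlinarith

lemma two_b_ne (hb : b < 1 - N) (hN : 1 ≤ N) {j : ℕ} (hj : j ≤ N - 1) :
    2 * b + (j:ℝ) ≠ 0 := (hN_pos hb hN hj).2.ne

lemma f_zero_eq : f b 0 = Polynomial.C 1 := by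
  simp [f, d_zero]

lemma f_eval_one_pos (hb : b < 1 - N) (hN : 1 ≤ N) {n : ℕ} (hn : n ≤ N) :
    0 < (f b n).eval 1 := by
  induction n using Nat.strong_induction_on with
  | _ n ih =>
    match n, hn with
    | 0, _ => simp [f_zero_eq]
    | 1, hn1 =>
      have hb0 : b ≠ 0 := by
        have h : b + ((0:ℕ):ℝ) < 0 := (hN_pos hb hN (j := 0) (by omega)).1
        push_cast at h
        exact ne_of_lt (by linarith)
      have : (f b 1).eval 1 = 1 - d b 1 := by
        simp [f, d_zero, Finset.sum_range_succ, sub_eq_add_neg]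
      rw [this, d_succ, d_zero]
      have : b / (2 * b) = 1/2 := by
        field_simp
      simp only [Nat.cast_zero, add_zero] at *
      rw [this]; norm_num
    | (m+2), hm2 =>
      have hrec := f_rec b m (fun j hj => two_b_ne hb hN (by omega))
      have := congrArg (Polynomial.eval 1) hrec
      simp only [Polynomial.eval_mul, Polynomial.eval_add, Polynomial.eval_sub,
        Polynomial.eval_C, Polynomial.eval_X, Polynomial.eval_one] at this
      have h1 : (f b (m+2)).eval 1 * (2 * b + ((m:ℝ)+1)) = (b + ((m:ℝ)+1)) * (f b (m+1)).eval 1 := by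
        nlinarith [this]
      have hp := hN_pos hb hN (j := m+1) (by omega)
      push_cast at hp
      have hprev : 0 < (f b (m+1)).eval 1 := ih (m+1) (by omega) (by omega)
      nlinarith [h1, hp.1, hp.2, hprev]

lemma poly_root_between (p : Polynomial ℝ) {a c : ℝ} (hac : a < c)
    (h : p.eval a * p.eval c < 0) : ∃ x, a < x ∧ x < c ∧ p.eval x = 0 := by
  have hcont : ContinuousOn (fun x => p.eval x) (Set.Icc a c) :=
    (Polynomial.continuous p).continuousOn
  rcases lt_or_ge (p.eval a) 0 with ha | ha
  · have hc : 0 < p.eval c := by nlinarith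
    have := intermediate_value_Ioo hac.le hcont (a := a) (b := c)
    have h0 : (0:ℝ) ∈ Set.Ioo (p.eval a) (p.eval c) := ⟨ha, hc⟩
    obtain ⟨x, hx, hx0⟩ := this h0
    exact ⟨x, hx.1, hx.2, hx0⟩
  · have ha' : 0 < p.eval a := by
      rcases ha.lt_or_eq with h' | h'
      · exact h'
      · exfalso; rw [← h'] at h; simp at h
    have hc : p.eval c < 0 := by nlinarith
    have := intermediate_value_Ioo' hac.le hcont (a := a) (b := c)
    have h0 : (0:ℝ) ∈ Set.Ioo (p.eval c) (p.eval a) := ⟨hc, ha'⟩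
    obtain ⟨x, hx, hx0⟩ := this h0
    exact ⟨x, hx.1, hx.2, hx0⟩

end HG

namespace HG

variable {b : ℝ} {N : ℕ}

lemma sign_prod : ∀ (n : ℕ) (c : ℕ) (r : Fin n → ℝ) (x : ℝ), c ≤ n →
    (∀ i : Fin n, (i:ℕ) < c → r i < x) → (∀ i : Fin n, c ≤ (i:ℕ) → x < r i) →
    0 < (-1:ℝ)^(n - c) * ∏ i, (x - r i) := by
  intro n
  induction n with
  | zero =>
    intro c r x hc _ _
    interval_cases c
    simp
  | succ n ih =>
    intro c r x hc h1 h2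
    rcases Nat.lt_or_ge c (n+1) with hlt | hge
    · have hcn : c ≤ n := by omega
      rw [Fin.prod_univ_castSucc]
      have IH := ih c (fun i => r i.castSucc) x hcn
        (fun i hi => h1 i.castSucc (by simpa using hi))
        (fun i hi => h2 i.castSucc (by simpa using hi))
      have hlast : 0 < r (Fin.last n) - x := by
        have := h2 (Fin.last n) (by simp [Fin.last]; omega)
        linarith
      have e : (n + 1) - c = (n - c) + 1 := by omega
      rw [e, pow_succ]
      nlinarith [mul_pos IH hlast]
    · have hc' : c = n + 1 := by omega
      subst hc'
      simp only [Nat.sub_self, pow_zero, one_mul]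
      apply Finset.prod_pos
      intro i _
      have := h1 i i.isLt
      linarith

/-- Induction data: roots and interlacing for the pair `(f b n, f b (n+1))`. -/
def Good (b : ℝ) (n : ℕ) : Prop :=
  ∃ (r : Fin n → ℝ) (s : Fin (n+1) → ℝ),
    (∀ j : Fin (n+1), 1 < s j) ∧
    (∀ (j : Fin (n+1)) (i : Fin n), ((i:ℕ) < (j:ℕ) → r i < s j) ∧ ((j:ℕ) ≤ (i:ℕ) → s j < r i)) ∧
    StrictMono s ∧
    f b n = C ((-1:ℝ)^n * d b n) * ∏ i, (X - C (r i)) ∧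
    f b (n+1) = C ((-1:ℝ)^(n+1) * d b (n+1)) * ∏ j, (X - C (s j))

lemma good_zero (hb : b < 1 - N) (hN : 1 ≤ N) : Good b 0 := by
  have hb0 : b ≠ 0 := by
    have h : b + ((0:ℕ):ℝ) < 0 := (hN_pos hb hN (j := 0) (by omega)).1
    push_cast at h
    exact ne_of_lt (by linarith)
  have hd1 : d b 1 = 1/2 := by
    rw [d_succ, d_zero]
    push_cast
    field_simp
    ring
  refine ⟨Fin.elim0, fun _ => 2, by norm_num, fun j i => i.elim0, ?_, ?_, ?_⟩
  · intro a c hac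
    have h1 := c.isLt
    have h2 := Fin.lt_iff_val_lt_val.mp hac
    omega
  · simp [f_zero_eq, d_zero]
  · rw [Fin.prod_univ_one]
    ext k
    rw [f_coeff]
    rcases k with _ | _ | k
    · simp [hd1, d_zero, coeff_C_mul, coeff_sub, coeff_C]
    · simp [hd1, coeff_C_mul, coeff_sub, coeff_C, coeff_X]
    · simp [coeff_C_mul, coeff_sub, coeff_C, coeff_X, Nat.choose_eq_zero_of_lt]

end HG

namespace HG

variable {b : ℝ} {N : ℕ}

lemma good_step (hb : b < 1 - N) (hN : 1 ≤ N) {n : ℕ} (hn : n + 2 ≤ N) (hg : Good b n) :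
    Good b (n+1) := by
  classical
  obtain ⟨r, s, hs1, hint, hsm, hfn, hfn1⟩ := hg
  have hdn : 0 < d b n := d_pos hb (by omega)
  have hdn2 : 0 < d b (n+2) := d_pos hb (by omega)
  have hA : 2 * b + ((n:ℝ)+1) < 0 := by
    have h := (hN_pos hb hN (j := n+1) (by omega)).2
    push_cast at h; linarith
  have hrec := f_rec b n (fun j hj => two_b_ne hb hN (by omega))
  have hevn : ∀ x : ℝ, (f b n).eval x = (-1:ℝ)^n * d b n * ∏ i, (x - r i) := by
    intro x; rw [hfn]; simp [Polynomial.eval_prod]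
  have hroot_s : ∀ j : Fin (n+1), (f b (n+1)).eval (s j) = 0 := by
    intro j
    rw [hfn1]
    simp only [Polynomial.eval_mul, Polynomial.eval_prod, Polynomial.eval_sub,
      Polynomial.eval_X, Polynomial.eval_C]
    have : ∏ i, (s j - s i) = 0 :=
      Finset.prod_eq_zero (Finset.mem_univ j) (by simp)
    rw [this, mul_zero]
  -- sign of f (n+2) at the points s j
  have hsign : ∀ j : Fin (n+1), 0 < (-1:ℝ)^((j:ℕ)+1) * (f b (n+2)).eval (s j) := by
    intro j
    have hjn : (j:ℕ) ≤ n := by omega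
    have e := congrArg (Polynomial.eval (s j)) hrec
    simp only [Polynomial.eval_mul, Polynomial.eval_add, Polynomial.eval_sub,
      Polynomial.eval_C, Polynomial.eval_X, Polynomial.eval_one, hroot_s j, mul_zero,
      zero_add, zero_mul, add_zero, zero_sub, sub_zero, mul_comm] at e
    -- e should now say: (2*b + (n+1)) * eval (s j) (f b (n+2)) = (n+1) * (s j - 1) * eval (s j) (f b n)  (up to comm)
    have hP : 0 < (-1:ℝ)^(n - (j:ℕ)) * ∏ i, (s j - r i) :=
      sign_prod n (j:ℕ) r (s j) hjn (fun i hi => (hint j i).1 hi) (fun i hi => (hint j i).2 hi)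
    have hc1 : 0 < ((n:ℝ)+1) * (s j - 1) := by
      have := hs1 j
      have : (0:ℝ) < s j - 1 := by linarith
      positivity
    have hpw2 : (-1:ℝ)^((j:ℕ)) * (-1:ℝ)^n = (-1:ℝ)^(n - (j:ℕ)) := by
      rw [← pow_add]
      have h2 : (j:ℕ) + n = (n - (j:ℕ)) + 2*(j:ℕ) := by omega
      rw [h2, pow_add, pow_mul]
      norm_num
    have e' : (2 * b + ((n:ℝ)+1)) * (f b (n+2)).eval (s j)
        = (((n:ℝ)+1) * (s j - 1)) * ((-1:ℝ)^n * d b n * ∏ i, (s j - r i)) := by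
      rw [← hevn]
      linarith [e]
    have key1 : ((-1:ℝ)^((j:ℕ)+1) * (f b (n+2)).eval (s j)) * (2 * b + ((n:ℝ)+1))
        = -((((n:ℝ)+1) * (s j - 1)) * (d b n * ((-1:ℝ)^(n - (j:ℕ)) * ∏ i, (s j - r i)))) := by
      linear_combination ((-1:ℝ)^((j:ℕ)+1)) * e'
        - ((((n:ℝ)+1) * (s j - 1)) * d b n * (∏ i, (s j - r i))) * hpw2
    nlinarith [key1, hA, mul_pos hc1 (mul_pos hdn hP)]
  -- positive value at 1
  have hpos1 : 0 < (f b (n+2)).eval 1 := f_eval_one_pos hb hN (by omega)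
  -- a large point M beyond all s j where the sign is (-1)^(n+2)
  have hlc : (f b (n+2)).leadingCoeff = (-1:ℝ)^(n+2) * d b (n+2) := f_leadingCoeff hb (by omega)
  have hfne : f b (n+2) ≠ 0 := f_ne_zero hb (by omega)
  have hdeg : (f b (n+2)).natDegree = n + 2 := f_natDegree hb (by omega)
  obtain ⟨M, hM1, hM2⟩ : ∃ M, s (Fin.last n) < M ∧ 0 < (-1:ℝ)^n * (f b (n+2)).eval M := by
    set g : Polynomial ℝ := C ((-1:ℝ)^n) * f b (n+2) with hg
    have hcne : ((-1:ℝ)^n) ≠ 0 := by positivity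
    have hgdeg : 0 < g.degree := by
      rw [hg, Polynomial.degree_C_mul hcne]
      rw [Polynomial.degree_eq_natDegree hfne, hdeg]
      exact_mod_cast Nat.succ_pos (n+1)
    have hglc : 0 ≤ g.leadingCoeff := by
      rw [hg, Polynomial.leadingCoeff_mul, Polynomial.leadingCoeff_C, hlc]
      have h1 : (-1:ℝ)^n * (-1:ℝ)^(n+2) = 1 := by
        rw [← pow_add]
        have h2 : n + (n+2) = 2*(n+1) := by ring
        rw [h2, pow_mul]
        norm_num
      rw [← mul_assoc, h1, one_mul]
      positivity
    have htend := Polynomial.tendsto_atTop_of_leadingCoeff_nonneg g hgdeg hglc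
    have hev : ∀ᶠ x in Filter.atTop, 0 < Polynomial.eval x g ∧ s (Fin.last n) < x :=
      (htend.eventually_gt_atTop 0).and (Filter.eventually_gt_atTop _)
    obtain ⟨M, hM⟩ := hev.exists
    refine ⟨M, hM.2, ?_⟩
    have := hM.1
    rwa [hg, Polynomial.eval_mul, Polynomial.eval_C] at this
  -- the endpoints of the intervals
  set low : Fin (n+2) → ℝ := fun k =>
    if h : (k:ℕ) = 0 then 1 else s ⟨(k:ℕ)-1, by omega⟩ with hlow
  set high : Fin (n+2) → ℝ := fun k =>
    if h : (k:ℕ) ≤ n then s ⟨(k:ℕ), by omega⟩ else M with hhigh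
  have hlh : ∀ k : Fin (n+2), low k < high k := by
    intro k
    rcases Nat.eq_zero_or_pos (k:ℕ) with h0 | h0
    · rcases Nat.lt_or_ge (k:ℕ) (n+1) with h1 | h1
      · simp only [hlow, hhigh, h0, dif_pos]
        rw [dif_pos (by omega)]
        exact hs1 _
      · omega
    · rcases Nat.lt_or_ge (k:ℕ) (n+1) with h1 | h1
      · simp only [hlow, hhigh]
        rw [dif_neg (by omega), dif_pos (by omega)]
        exact hsm (Fin.mk_lt_mk.mpr (by omega))
      · have hk : (k:ℕ) = n+1 := by omega
        simp only [hlow, hhigh]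
        rw [dif_neg (by omega), dif_neg (by omega)]
        have : s ⟨(k:ℕ)-1, by omega⟩ ≤ s (Fin.last n) := by
          apply hsm.monotone
          simp only [Fin.le_def, Fin.last]
          omega
        linarith
  have hsl : ∀ k : Fin (n+2), 0 < (-1:ℝ)^((k:ℕ)) * (f b (n+2)).eval (low k) := by
    intro k
    rcases Nat.eq_zero_or_pos (k:ℕ) with h0 | h0
    · simp only [hlow, h0, dif_pos]
      simpa using hpos1
    · simp only [hlow]
      rw [dif_neg (by omega)]
      have := hsign ⟨(k:ℕ)-1, by omega⟩
      simp only at this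
      have hkk : (k:ℕ) - 1 + 1 = (k:ℕ) := by omega
      rwa [hkk] at this
  have hsh : ∀ k : Fin (n+2), 0 < (-1:ℝ)^((k:ℕ)+1) * (f b (n+2)).eval (high k) := by
    intro k
    rcases Nat.lt_or_ge (k:ℕ) (n+1) with h1 | h1
    · simp only [hhigh]
      rw [dif_pos (by omega)]
      exact hsign ⟨(k:ℕ), by omega⟩
    · have hk : (k:ℕ) = n+1 := by omega
      simp only [hhigh]
      rw [dif_neg (by omega), hk]
      have hpar : (-1:ℝ)^(n+1+1) = (-1:ℝ)^n := by
        rw [pow_succ, pow_succ]; ring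
      rw [hpar]
      exact hM2
  -- roots in each interval
  have hex : ∀ k : Fin (n+2), ∃ x, low k < x ∧ x < high k ∧ (f b (n+2)).eval x = 0 := by
    intro k
    apply poly_root_between _ (hlh k)
    have h1 := hsl k
    have h2 := hsh k
    have h3 := mul_pos h1 h2
    have h4 : ((-1:ℝ)^((k:ℕ)) * (f b (n+2)).eval (low k)) *
        ((-1:ℝ)^((k:ℕ)+1) * (f b (n+2)).eval (high k))
        = -((f b (n+2)).eval (low k) * (f b (n+2)).eval (high k)) := by
      have h5 : ((-1:ℝ)^((k:ℕ))) * ((-1:ℝ)^((k:ℕ)+1)) = -1 := by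
        rw [← pow_add]
        have : (k:ℕ) + ((k:ℕ)+1) = 2*(k:ℕ)+1 := by ring
        rw [this, pow_succ, pow_mul]
        norm_num
      linear_combination ((f b (n+2)).eval (low k) * (f b (n+2)).eval (high k)) * h5
    nlinarith [h3, h4]
  choose t ht1 ht2 ht3 using hex
  -- assemble the Good data for n+1
  have hlow1 : ∀ k : Fin (n+2), 1 ≤ low k := by
    intro k
    rcases Nat.eq_zero_or_pos (k:ℕ) with h0 | h0
    · simp only [hlow]; rw [dif_pos h0]
    · simp only [hlow]
      rw [dif_neg (by omega)]
      exact (hs1 _).le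
  have ha : ∀ k : Fin (n+2), 1 < t k := fun k => lt_of_le_of_lt (hlow1 k) (ht1 k)
  have hb' : ∀ (j : Fin (n+2)) (i : Fin (n+1)),
      ((i:ℕ) < (j:ℕ) → s i < t j) ∧ ((j:ℕ) ≤ (i:ℕ) → t j < s i) := by
    intro j i
    constructor
    · intro hij
      have hj0 : ¬ ((j:ℕ) = 0) := by omega
      have h1 : s i ≤ s ⟨(j:ℕ)-1, by omega⟩ := by
        apply hsm.monotone
        simp only [Fin.le_def]
        omega
      have h2 : low j = s ⟨(j:ℕ)-1, by omega⟩ := by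
        simp only [hlow]
        rw [dif_neg hj0]
      have h3 := ht1 j
      rw [h2] at h3
      linarith
    · intro hji
      have hii := i.isLt
      have hjn : (j:ℕ) ≤ n := by omega
      have h2 : high j = s ⟨(j:ℕ), by omega⟩ := by
        simp only [hhigh]
        rw [dif_pos hjn]
      have h1 : s ⟨(j:ℕ), by omega⟩ ≤ s i := by
        apply hsm.monotone
        simp only [Fin.le_def]
        omega
      have h3 := ht2 j
      rw [h2] at h3
      linarith
  have hc : StrictMono t := by
    rw [Fin.strictMono_iff_lt_succ]
    intro k
    have e1 : high k.castSucc = s ⟨(k:ℕ), by omega⟩ := by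
      simp only [hhigh, Fin.coe_castSucc]
      rw [dif_pos (by omega)]
    have e2 : low k.succ = s ⟨(k:ℕ), by omega⟩ := by
      simp only [hlow, Fin.val_succ]
      rw [dif_neg (by omega)]
      congr 1
    have h1 := ht2 k.castSucc
    have h2 := ht1 k.succ
    rw [e1] at h1
    rw [e2] at h2
    linarith
  have hinj : Function.Injective t := hc.injective
  set T : Multiset ℝ := Multiset.map t Finset.univ.val with hT
  have hTcard : Multiset.card T = n + 2 := by simp [hT]
  have hTnodup : T.Nodup := Multiset.Nodup.map hinj Finset.univ.nodup
  have hTle : T ≤ (f b (n+2)).roots := by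
    rw [Multiset.le_iff_count]
    intro a
    by_cases haT : a ∈ T
    · have h1 : T.count a = 1 := Multiset.count_eq_one_of_mem hTnodup haT
      rw [h1, Polynomial.count_roots]
      refine (Polynomial.rootMultiplicity_pos hfne).mpr ?_
      obtain ⟨j, _, rfl⟩ := Multiset.mem_map.mp haT
      exact ht3 j
    · rw [Multiset.count_eq_zero_of_notMem haT]
      exact Nat.zero_le _
  have hTeq : T = (f b (n+2)).roots := by
    apply Multiset.eq_of_le_of_card_le hTle
    rw [hTcard]
    calc Multiset.card (f b (n+2)).roots ≤ (f b (n+2)).natDegree := Polynomial.card_roots' _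
      _ = n + 2 := hdeg
  have hroots_card : Multiset.card (f b (n+2)).roots = (f b (n+2)).natDegree := by
    rw [← hTeq, hTcard, hdeg]
  have hfact := Polynomial.C_leadingCoeff_mul_prod_multiset_X_sub_C hroots_card
  have hprodeq : (Multiset.map (fun a => X - C a) (f b (n+2)).roots).prod
      = ∏ j, (X - C (t j)) := by
    rw [← hTeq, hT, Multiset.map_map]
    rw [Finset.prod_eq_multiset_prod]
    rfl
  refine ⟨s, t, ha, hb', hc, hfn1, ?_⟩
  calc f b (n+2)
      = C ((f b (n+2)).leadingCoeff) * ((f b (n+2)).roots.map fun a => X - C a).prod :=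
        hfact.symm
    _ = C ((-1:ℝ)^(n+2) * d b (n+2)) * ∏ j, (X - C (t j)) := by rw [hlc, hprodeq]


lemma good_all (N : ℕ) (hb : b < 1 - N) (hN : 1 ≤ N) : ∀ n, n + 1 ≤ N → Good b n := by
  intro n
  induction n with
  | zero => intro _; exact good_zero hb hN
  | succ m ih =>
    intro h
    exact good_step hb hN (by omega) (ih (by omega))

lemma hyp_coeff (n : ℕ) (hn : 1 ≤ n) (hb : b < 1 - n) (k : ℕ) (hk : k ≤ n) :
    (ascPochhammer ℝ k).eval (-(n:ℝ)) * (ascPochhammer ℝ k).eval b /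
      ((ascPochhammer ℝ k).eval (2*b) * (k.factorial : ℝ))
    = (-1:ℝ)^k * (n.choose k : ℝ) * d b k := by
  have h1 : (ascPochhammer ℝ k).eval (-(n:ℝ)) = (-1:ℝ)^k * ((k.factorial : ℝ) * (n.choose k : ℝ)) := by
    rw [ascPochhammer_eval_neg_eq_descPochhammer, descPochhammer_eval_eq_descFactorial,
      Nat.descFactorial_eq_factorial_mul_choose]
    push_cast
    ring
  have h2 : (ascPochhammer ℝ k).eval b = ∏ j ∈ Finset.range k, (b + j) :=
    ascPochhammer_eval_prod b k
  have h3 : (ascPochhammer ℝ k).eval (2*b) = ∏ j ∈ Finset.range k, (2*b + j) :=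
    ascPochhammer_eval_prod _ k
  have hd : d b k = (∏ j ∈ Finset.range k, (b+(j:ℝ))) / (∏ j ∈ Finset.range k, (2*b+(j:ℝ))) := by
    rw [d, Finset.prod_div_distrib]
  have hne : (∏ j ∈ Finset.range k, (2*b+(j:ℝ))) ≠ 0 := by
    rw [Finset.prod_ne_zero_iff]
    intro j hj
    rw [Finset.mem_range] at hj
    exact two_b_ne (N := n) hb hn (by omega)
  have hfac : (k.factorial : ℝ) ≠ 0 := by
    exact_mod_cast k.factorial_ne_zero
  rw [h1, h2, h3, hd]
  field_simp

lemma hyp_eq (n : ℕ) (hn : 1 ≤ n) (hb : b < 1 - n) :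
    hypPoly n b (2*b) = (f b n).map (algebraMap ℝ ℂ) := by
  rw [hypPoly, f, Polynomial.map_sum]
  apply Finset.sum_congr rfl
  intro k hk
  rw [Finset.mem_range] at hk
  rw [Polynomial.map_mul, Polynomial.map_C, Polynomial.map_pow, Polynomial.map_X]
  congr 1
  rw [hyp_coeff n hn hb k (by omega)]
  rfl




lemma part1 (n : ℕ) (hn : 1 ≤ n) (b : ℝ) (hb : b < 1 - (n:ℝ)) :
    Multiset.card (hypPoly n b (2*b)).roots = n ∧
    ∀ z ∈ (hypPoly n b (2*b)).roots, z.im = 0 ∧ 1 < z.re := by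
  obtain ⟨m, rfl⟩ : ∃ m, n = m + 1 := ⟨n-1, by omega⟩
  obtain ⟨r, s, hs1, hint, hsm, hfm, hfact⟩ :=
    good_all (b := b) (m+1) (by exact_mod_cast hb) (by omega) m (le_refl _)
  have heq := hyp_eq (b := b) (m+1) (by omega) (by exact_mod_cast hb)
  have hdpos : 0 < d b (m+1) := d_pos (n := m+1) (by exact_mod_cast hb) (le_refl _)
  have hlcne : ((-1:ℝ)^(m+1) * d b (m+1)) ≠ 0 := by
    have : ((-1:ℝ)^(m+1)) ≠ 0 := by
      apply pow_ne_zero; norm_num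
    exact mul_ne_zero this hdpos.ne'
  have hlcC : (algebraMap ℝ ℂ) ((-1:ℝ)^(m+1) * d b (m+1)) ≠ 0 := by
    simpa using hlcne
  have hmap : hypPoly (m+1) b (2*b)
      = C ((algebraMap ℝ ℂ) ((-1:ℝ)^(m+1) * d b (m+1)))
        * ∏ j : Fin (m+1), (X - C (((s j : ℝ) : ℂ))) := by
    rw [heq, hfact, Polynomial.map_mul, Polynomial.map_C, Polynomial.map_prod]
    congr 1
    apply Finset.prod_congr rfl
    intro j _
    rw [Polynomial.map_sub, Polynomial.map_X, Polynomial.map_C]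
    norm_num
  have hroots : (hypPoly (m+1) b (2*b)).roots
      = Multiset.map (fun j => ((s j : ℝ) : ℂ)) Finset.univ.val := by
    rw [hmap, Polynomial.roots_C_mul _ hlcC]
    have h2 : (∏ j : Fin (m+1), (X - C (((s j : ℝ) : ℂ))))
        = ((Multiset.map (fun j => ((s j:ℝ):ℂ)) Finset.univ.val).map (fun a => X - C a)).prod := by
      rw [Finset.prod_eq_multiset_prod, Multiset.map_map]
      rfl
    rw [h2, Polynomial.roots_multiset_prod_X_sub_C]
  constructor
  · rw [hroots]
    simp
  · intro z hz
    rw [hroots, Multiset.mem_map] at hz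
    obtain ⟨j, _, rfl⟩ := hz
    refine ⟨Complex.ofReal_im _, ?_⟩
    rw [Complex.ofReal_re]
    exact hs1 j



lemma d_tendsto (k : ℕ) :
    Filter.Tendsto (fun b : ℝ => d b k) Filter.atBot (nhds ((2⁻¹ : ℝ)^k)) := by
  induction k with
  | zero =>
    simp only [d_zero, pow_zero]
    exact tendsto_const_nhds
  | succ k ih =>
    have hhalf : Filter.Tendsto (fun b : ℝ => (b + k) / (2*b + k)) Filter.atBot (nhds (2⁻¹ : ℝ)) := by
      have hinv : Filter.Tendsto (fun b : ℝ => (k:ℝ) * b⁻¹) Filter.atBot (nhds 0) := by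
        have h1 : Filter.Tendsto (fun b : ℝ => (-b)⁻¹) Filter.atBot (nhds 0) :=
          tendsto_inv_atTop_zero.comp Filter.tendsto_neg_atBot_atTop
        have h2 : Filter.Tendsto (fun b : ℝ => b⁻¹) Filter.atBot (nhds 0) := by
          have := h1.neg
          simp only [inv_neg, neg_neg, neg_zero] at this
          exact this
        simpa using h2.const_mul (k:ℝ)
      have hnum : Filter.Tendsto (fun b : ℝ => 1 + (k:ℝ) * b⁻¹) Filter.atBot (nhds 1) := by
        simpa using (tendsto_const_nhds (x := (1:ℝ)) (f := Filter.atBot)).add hinv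
      have hden : Filter.Tendsto (fun b : ℝ => 2 + (k:ℝ) * b⁻¹) Filter.atBot (nhds 2) := by
        simpa using (tendsto_const_nhds (x := (2:ℝ)) (f := Filter.atBot)).add hinv
      have hdiv := hnum.div hden (by norm_num)
      have heq : ∀ᶠ b : ℝ in Filter.atBot,
          (1 + (k:ℝ) * b⁻¹) / (2 + (k:ℝ) * b⁻¹) = (b + k) / (2*b + k) := by
        filter_upwards [Filter.eventually_lt_atBot (0:ℝ)] with b hb0
        have hbne : b ≠ 0 := hb0.ne
        by_cases hzd : 2*b + (k:ℝ) = 0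
        · have h2 : 2 + (k:ℝ) * b⁻¹ = 0 := by
            have hk : (k:ℝ) = -(2*b) := by linarith
            rw [hk]
            field_simp
            ring
          rw [hzd, h2, div_zero, div_zero]
        · have hden_ne : 2 + (k:ℝ) * b⁻¹ ≠ 0 := by
            intro hz
            apply hzd
            have h0 : (2 + (k:ℝ) * b⁻¹) * b = 0 := by rw [hz]; ring
            have hb' : (2 + (k:ℝ) * b⁻¹) * b = 2*b + k := by field_simp
            rw [hb'] at h0
            exact h0
          rw [div_eq_div_iff hden_ne hzd]
          field_simp
      have := hdiv.congr' heq
      norm_num at this ⊢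
      exact this
    rw [show ((2:ℝ)⁻¹)^(k+1) = (2⁻¹:ℝ)^k * 2⁻¹ by ring]
    exact (Filter.Tendsto.mul ih hhalf).congr (fun b => (d_succ b k).symm)

lemma part2 (n : ℕ) (hn : 1 ≤ n) {ε : ℝ} (hε : 0 < ε) :
    ∃ B : ℝ, ∀ b : ℝ, b < B →
      ∀ z ∈ (hypPoly n b (2*b)).roots, ‖z - 2‖ < ε := by
  classical
  set δ : ℝ := ε^n / ((ε+2)^n * ((n:ℝ)+1) * 4^n * 2) with hδdef
  have hδ : 0 < δ := by positivity
  have hev : ∀ᶠ b : ℝ in Filter.atBot,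
      (∀ k ∈ Finset.range (n+1), |d b k - (2⁻¹:ℝ)^k| < δ) ∧ b < 1 - (n:ℝ) := by
    refine Filter.Eventually.and ?_ (Filter.eventually_lt_atBot _)
    rw [Filter.eventually_all_finset]
    intro k _
    have h2 := Metric.tendsto_nhds.mp (d_tendsto k) δ hδ
    filter_upwards [h2] with b hb
    rwa [Real.dist_eq] at hb
  obtain ⟨B, hB⟩ := Filter.eventually_atBot.mp hev
  refine ⟨B, ?_⟩
  intro b hbB z hz
  obtain ⟨hclose, hb1⟩ := hB b hbB.le
  have heq := hyp_eq (b := b) n hn hb1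
  have hz0 : Polynomial.eval z (hypPoly n b (2*b)) = 0 := (Polynomial.mem_roots'.mp hz).2
  have hevalf : Polynomial.eval z ((f b n).map (algebraMap ℝ ℂ))
      = ∑ k ∈ Finset.range (n+1), (((-1:ℝ)^k * (n.choose k : ℝ) * d b k : ℝ) : ℂ) * z^k := by
    rw [f, Polynomial.map_sum, Polynomial.eval_finset_sum]
    apply Finset.sum_congr rfl
    intro k _
    rw [Polynomial.map_mul, Polynomial.map_C, Polynomial.map_pow, Polynomial.map_X]
    simp [Complex.coe_algebraMap]
  have hsum0 : ∑ k ∈ Finset.range (n+1), (((-1:ℝ)^k * (n.choose k:ℝ) * d b k : ℝ):ℂ) * z^k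
      = 0 := by
    rw [← hevalf, ← heq, hz0]
  have hbin : ((1:ℂ) - z/2)^n
      = ∑ k ∈ Finset.range (n+1), (((n.choose k : ℝ) * (-2⁻¹:ℝ)^k : ℝ):ℂ) * z^k := by
    have h1 : ((1:ℂ) - z/2)^n = (-(z/2) + 1)^n := by ring_nf
    rw [h1, add_pow]
    apply Finset.sum_congr rfl
    intro k _
    push_cast
    ring
  have hdiff : ((1:ℂ) - z/2)^n
      = ∑ k ∈ Finset.range (n+1),
          ((((n.choose k : ℝ) * ((-2⁻¹:ℝ)^k - (-1:ℝ)^k * d b k)) : ℝ):ℂ) * z^k := by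
    rw [hbin, ← sub_zero (∑ k ∈ Finset.range (n+1),
      (((n.choose k : ℝ) * (-2⁻¹:ℝ)^k : ℝ):ℂ) * z^k), ← hsum0, ← Finset.sum_sub_distrib]
    apply Finset.sum_congr rfl
    intro k _
    push_cast
    ring
  set u := ‖z - 2‖ with hu
  have hu0 : 0 ≤ u := norm_nonneg _
  have habs1 : ‖(1:ℂ) - z/2‖ = u / 2 := by
    have h1 : (1:ℂ) - z/2 = -(z - 2)/2 := by ring
    rw [h1, norm_div, norm_neg, Complex.norm_two]
  have hzb : ‖z‖ ≤ u + 2 := by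
    calc ‖z‖ = ‖(z - 2) + 2‖ := by ring_nf
      _ ≤ u + ‖(2:ℂ)‖ := norm_add_le _ _
      _ = u + 2 := by rw [Complex.norm_two]
  have hterm : ∀ k ∈ Finset.range (n+1),
      ‖((((n.choose k : ℝ) * ((-2⁻¹:ℝ)^k - (-1:ℝ)^k * d b k)) : ℝ):ℂ) * z^k‖
      ≤ (2:ℝ)^n * δ * (u+2)^n := by
    intro k hk
    rw [Finset.mem_range] at hk
    rw [norm_mul, norm_pow, Complex.norm_real, Real.norm_eq_abs]
    have hch : |(n.choose k : ℝ)| ≤ (2:ℝ)^n := by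
      rw [abs_of_nonneg (by positivity)]
      have h2 : n.choose k ≤ 2^n := by
        calc n.choose k ≤ ∑ i ∈ Finset.range (n+1), n.choose i :=
              Finset.single_le_sum (fun i _ => Nat.zero_le _) (Finset.mem_range.mpr hk)
          _ = 2^n := Nat.sum_range_choose n
      exact_mod_cast h2
    have hdk : |(-2⁻¹:ℝ)^k - (-1:ℝ)^k * d b k| < δ := by
      have h3 : (-2⁻¹:ℝ)^k - (-1:ℝ)^k * d b k = (-1:ℝ)^k * ((2⁻¹:ℝ)^k - d b k) := by
        rw [neg_pow, neg_pow]
        ring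
      rw [h3, abs_mul, abs_pow, abs_neg, abs_one, one_pow, one_mul, abs_sub_comm]
      exact hclose k (Finset.mem_range.mpr hk)
    have h1 : |((n.choose k : ℝ) * ((-2⁻¹:ℝ)^k - (-1:ℝ)^k * d b k))| ≤ (2:ℝ)^n * δ := by
      rw [abs_mul]
      exact mul_le_mul hch hdk.le (abs_nonneg _) (by positivity)
    have h2 : (‖z‖)^k ≤ (u+2)^n := by
      calc (‖z‖)^k ≤ (u+2)^k := pow_le_pow_left₀ (norm_nonneg _) hzb k
        _ ≤ (u+2)^n := pow_le_pow_right₀ (by linarith) (by omega)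
    calc |((n.choose k : ℝ) * ((-2⁻¹:ℝ)^k - (-1:ℝ)^k * d b k))| * (‖z‖)^k
        ≤ ((2:ℝ)^n * δ) * (u+2)^n := mul_le_mul h1 h2 (by positivity) (by positivity)
      _ = (2:ℝ)^n * δ * (u+2)^n := by ring
  have hsumbound : (u/2)^n ≤ ((n:ℝ)+1) * ((2:ℝ)^n * δ * (u+2)^n) := by
    have h1 : ‖((1:ℂ) - z/2)^n‖ = (u/2)^n := by
      rw [norm_pow, habs1]
    rw [← h1, hdiff]
    calc ‖∑ k ∈ Finset.range (n+1),
          ((((n.choose k : ℝ) * ((-2⁻¹:ℝ)^k - (-1:ℝ)^k * d b k)) : ℝ):ℂ) * z^k‖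
        ≤ ∑ k ∈ Finset.range (n+1), ‖
            ((((n.choose k : ℝ) * ((-2⁻¹:ℝ)^k - (-1:ℝ)^k * d b k)) : ℝ):ℂ) * z^k‖ :=
          norm_sum_le _ _
      _ ≤ ∑ _k ∈ Finset.range (n+1), (2:ℝ)^n * δ * (u+2)^n := Finset.sum_le_sum hterm
      _ = ((n:ℝ)+1) * ((2:ℝ)^n * δ * (u+2)^n) := by
          rw [Finset.sum_const, Finset.card_range, nsmul_eq_mul]
          push_cast
          ring
  by_contra hcon
  push_neg at hcon
  have hεu : ε ≤ u := hcon
  have hkey : ε * (u+2) ≤ u * (ε+2) := by nlinarith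
  have hkeyn : (ε * (u+2))^n ≤ (u * (ε+2))^n :=
    pow_le_pow_left₀ (by positivity) hkey n
  have h4n : (4:ℝ)^n = 2^n * 2^n := by
    rw [show (4:ℝ) = 2*2 by norm_num, mul_pow]
  have hun : u^n ≤ ((n:ℝ)+1) * ((4:ℝ)^n * δ * (u+2)^n) := by
    have h2n : (0:ℝ) < 2^n := by positivity
    have h5 : u^n / 2^n ≤ ((n:ℝ)+1) * ((2:ℝ)^n * δ * (u+2)^n) := by
      rw [← div_pow]
      exact hsumbound
    calc u^n = (u^n / 2^n) * 2^n := by field_simp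
      _ ≤ (((n:ℝ)+1) * ((2:ℝ)^n * δ * (u+2)^n)) * 2^n := by
          exact mul_le_mul_of_nonneg_right h5 h2n.le
      _ = ((n:ℝ)+1) * ((4:ℝ)^n * δ * (u+2)^n) := by
          rw [h4n]; ring
  have hfin : ε^n * (u+2)^n ≤ ((ε+2)^n * (((n:ℝ)+1) * (4:ℝ)^n) * δ) * (u+2)^n := by
    calc ε^n * (u+2)^n = (ε*(u+2))^n := by rw [mul_pow]
      _ ≤ (u*(ε+2))^n := hkeyn
      _ = (ε+2)^n * u^n := by rw [mul_pow]; ring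
      _ ≤ (ε+2)^n * (((n:ℝ)+1) * ((4:ℝ)^n * δ * (u+2)^n)) :=
          mul_le_mul_of_nonneg_left hun (by positivity)
      _ = ((ε+2)^n * (((n:ℝ)+1) * (4:ℝ)^n) * δ) * (u+2)^n := by ring
  have hu2 : (0:ℝ) < (u+2)^n := by positivity
  have h6 : ε^n ≤ (ε+2)^n * (((n:ℝ)+1) * (4:ℝ)^n) * δ :=
    le_of_mul_le_mul_right hfin hu2
  have h7 : (ε+2)^n * (((n:ℝ)+1) * (4:ℝ)^n) * δ = ε^n / 2 := by
    rw [hδdef]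
    field_simp
  rw [h7] at h6
  have hεn : (0:ℝ) < ε^n := by positivity
  linarith

end HG

/-- For `b < 1 - n` all zeros of `F(-n, b; 2b; z)` are real and greater than `1`,
and they converge to `2` as `b → -∞`. -/
theorem hypPoly_2b_zeros_b_lt_one_sub_n (n : ℕ) (hn : 1 ≤ n) :
    (∀ b : ℝ, b < 1 - n →
      Multiset.card (hypPoly n b (2 * b)).roots = n ∧
      ∀ z ∈ (hypPoly n b (2 * b)).roots, z.im = 0 ∧ 1 < z.re) ∧
    (∀ ε : ℝ, 0 < ε → ∃ B : ℝ, ∀ b : ℝ, b < B →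
      ∀ z ∈ (hypPoly n b (2 * b)).roots, ‖z - 2‖ < ε) := by
  constructor
  · intro b hb
    exact HG.part1 n hn b hb
  · intro ε hε
    exact HG.part2 n hn hε
end

section
/- Let n ≥ 1 be an integer and let b ∈ ℝ with b > n − 1/2. Then all n zeros of the hypergeometric polynomial F(−n, b; 1/2; z) are real, simple, and lie in the open interval (0, 1). -/
open Polynomial
open scoped Classical

/-- evaluated ascending Pochhammer -/
noncomputable def pch (k : ℕ) (x : ℝ) : ℝ := (ascPochhammer ℝ k).eval x

lemma pch_zero (x : ℝ) : pch 0 x = 1 := by simp [pch]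

lemma pch_succ (k : ℕ) (x : ℝ) : pch (k+1) x = pch k x * (x + k) := by
  simp [pch, ascPochhammer_succ_right]

lemma pch_succ_left (k : ℕ) (x : ℝ) : pch (k+1) x = x * pch k (x+1) := by
  simp [pch, ascPochhammer_succ_left]

lemma pch_pos {k : ℕ} {x : ℝ} (hx : 0 < x) : 0 < pch k x := by
  induction k with
  | zero => simp [pch_zero]
  | succ k ih => rw [pch_succ]; positivity

lemma pch_neg_self (n : ℕ) : pch n (-(n:ℝ)) = (-1)^n * n.factorial := by
  induction n with
  | zero => simp [pch_zero]
  | succ n ih =>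
    rw [pch_succ_left]
    push_cast
    rw [show (-((n:ℝ)+1) + 1) = -(n:ℝ) by ring, ih, Nat.factorial_succ]
    push_cast
    ring

lemma pch_neg_top (m : ℕ) : pch (m+1) (-(m:ℝ)) = 0 := by
  rw [pch_succ]; simp

/-- hypergeometric coefficient -/
noncomputable def hA (a b c : ℝ) (k : ℕ) : ℝ := pch k a * pch k b / (pch k c * k.factorial)

lemma hA_zero (a b c : ℝ) : hA a b c 0 = 1 := by simp [hA, pch_zero]

/-- key contiguous coefficient identity -/
lemma hA_step (a b c : ℝ) (k : ℕ) (hc : 0 < c - 1) :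
    hA a b c (k+1) * (c + k) - hA a b c k * (a + b + k - 1)
      = (c - 1) * hA (a-1) (b-1) (c-1) (k+1) := by
  have hc0 : 0 < c := by linarith
  have h1 : (0:ℝ) < pch k c := pch_pos hc0
  have h2 : (0:ℝ) < pch k (c-1) := pch_pos hc
  have hck : pch (k+1) c = pch k c * (c + k) := pch_succ k c
  have hck' : pch (k+1) (c-1) = (c-1) * pch k c := by
    rw [pch_succ_left]; ring_nf
  have hak : pch (k+1) a = pch k a * (a + k) := pch_succ k a
  have hbk : pch (k+1) b = pch k b * (b + k) := pch_succ k b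
  have hak' : pch (k+1) (a-1) = (a-1) * pch k a := by
    rw [pch_succ_left]; ring_nf
  have hbk' : pch (k+1) (b-1) = (b-1) * pch k b := by
    rw [pch_succ_left]; ring_nf
  have hfk : ((k+1).factorial : ℝ) = (k+1) * k.factorial := by
    rw [Nat.factorial_succ]; push_cast; ring
  have hf : (0:ℝ) < (k.factorial : ℝ) := by positivity
  have hcpk : (0:ℝ) < c + k := by positivity
  rw [hA, hA, hA, hck, hck', hak, hbk, hak', hbk', hfk]
  field_simp
  ring

noncomputable def hQ (m : ℕ) (a b c : ℝ) : ℝ[X] :=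
  ∑ k ∈ Finset.range (m+1), C (hA a b c k) * X^k

lemma hQ_eval (m : ℕ) (a b c x : ℝ) :
    (hQ m a b c).eval x = ∑ k ∈ Finset.range (m+1), hA a b c k * x^k := by
  simp [hQ, eval_finset_sum]

lemma hQ_deriv_eval (m : ℕ) (a b c x : ℝ) :
    x * (hQ m a b c).derivative.eval x
      = ∑ k ∈ Finset.range (m+1), hA a b c k * k * x^k := by
  rw [hQ, derivative_sum]
  simp only [derivative_C_mul_X_pow, eval_finset_sum, eval_mul, eval_pow, eval_C, eval_X,
    Finset.mul_sum]
  apply Finset.sum_congr rfl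
  intro k _
  cases k with
  | zero => simp
  | succ j => push_cast; rw [pow_succ]; ring

lemma step_eval (m : ℕ) (b c x : ℝ) (hc : 0 < c - 1) :
    ((c-1)*(1-x) - ((-(m:ℝ))+b-c)*x) * (hQ m (-(m:ℝ)) b c).eval x
      + x*(1-x) * ((hQ m (-(m:ℝ)) b c).derivative.eval x)
    = (c-1) * (hQ (m+1) (-(m:ℝ)-1) (b-1) (c-1)).eval x := by
  set a := -(m:ℝ) with ha
  have hAtop : hA a b c (m+1) = 0 := by
    simp [hA, ha, pch_neg_top]
  have key : ∀ k ∈ Finset.range (m+1),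
      hA a b c (k+1) * (c+k) * x^(k+1) - hA a b c k * (a+b+k-1) * x^(k+1)
      = (c-1) * hA (a-1) (b-1) (c-1) (k+1) * x^(k+1) := by
    intro k _
    have h := hA_step a b c k hc
    calc hA a b c (k+1) * (c+k) * x^(k+1) - hA a b c k * (a+b+k-1) * x^(k+1)
        = (hA a b c (k+1) * (c+k) - hA a b c k * (a+b+k-1)) * x^(k+1) := by ring
      _ = ((c-1) * hA (a-1) (b-1) (c-1) (k+1)) * x^(k+1) := by rw [h]
      _ = _ := by ring
  have L1 : ((c-1)*(1-x) - (a+b-c)*x) * (hQ m a b c).eval x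
      + x*(1-x) * ((hQ m a b c).derivative.eval x)
      = ∑ k ∈ Finset.range (m+1),
          (hA a b c k * (c-1+k) * x^k - hA a b c k * (a+b+k-1) * x^(k+1)) := by
    have h2 : x*(1-x) * ((hQ m a b c).derivative.eval x)
        = (1-x) * (x * ((hQ m a b c).derivative.eval x)) := by ring
    rw [h2, hQ_deriv_eval, hQ_eval, Finset.mul_sum, Finset.mul_sum,
      ← Finset.sum_add_distrib]
    apply Finset.sum_congr rfl
    intro k _
    rw [pow_succ]
    ring
  have S1 : ∑ k ∈ Finset.range (m+1), hA a b c k * (c-1+k) * x^k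
      = (c-1)
        + ∑ k ∈ Finset.range (m+1), hA a b c (k+1) * (c+k) * x^(k+1) := by
    have e1 : ∑ k ∈ Finset.range (m+2), hA a b c k * (c-1+(k:ℝ)) * x^k
        = ∑ k ∈ Finset.range (m+1), hA a b c k * (c-1+(k:ℝ)) * x^k := by
      rw [Finset.sum_range_succ, hAtop]
      simp
    have e2 : ∑ k ∈ Finset.range (m+2), hA a b c k * (c-1+(k:ℝ)) * x^k
        = (∑ k ∈ Finset.range (m+1), hA a b c (k+1) * (c-1+((k:ℝ)+1)) * x^(k+1))
          + hA a b c 0 * (c-1+((0:ℕ):ℝ)) * x^0 := by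
      rw [Finset.sum_range_succ']
      push_cast
      congr 1
    rw [← e1, e2, add_comm, hA_zero]
    congr 1
    · norm_num
    · apply Finset.sum_congr rfl
      intro k _
      have : c-1+((k:ℝ)+1) = c+k := by ring
      rw [this]
  have R : (c-1) * (hQ (m+1) (a-1) (b-1) (c-1)).eval x
      = (c-1) + ∑ k ∈ Finset.range (m+1), (c-1) * hA (a-1) (b-1) (c-1) (k+1) * x^(k+1) := by
    rw [hQ_eval, Finset.mul_sum, Finset.sum_range_succ', hA_zero, add_comm]
    congr 1
    · norm_num
    · apply Finset.sum_congr rfl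
      intro k _
      ring
  rw [L1, Finset.sum_sub_distrib, S1, R, add_sub_assoc, ← Finset.sum_sub_distrib,
    Finset.sum_congr rfl key]

/-- the chain of polynomials -/
noncomputable def PP (n : ℕ) (b : ℝ) (k : ℕ) : ℝ[X] :=
  hQ k (-(k:ℝ)) (b+(n:ℝ)-k) (1/2+(n:ℝ)-k)

lemma G_hasDeriv (n : ℕ) (b : ℝ) (k : ℕ) (hk : k < n) {x : ℝ}
    (hx0 : 0 < x) (hx1 : x < 1) :
    HasDerivAt (fun y => y ^ ((n:ℝ)-k-1/2) * (1-y) ^ (b-(k:ℝ)-1/2) * (PP n b k).eval y)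
      (x ^ ((n:ℝ)-k-1/2-1) * (1-x) ^ (b-(k:ℝ)-1/2-1) *
        (((n:ℝ)-k-1/2) * (PP n b (k+1)).eval x)) x := by
  set r : ℝ := (n:ℝ)-k-1/2 with hr
  set s : ℝ := b-(k:ℝ)-1/2 with hs
  have h1x : 0 < 1 - x := by linarith
  have d1 : HasDerivAt (fun y:ℝ => y ^ r) (r * x^(r-1)) x :=
    Real.hasDerivAt_rpow_const (Or.inl hx0.ne')
  have d2 : HasDerivAt (fun y:ℝ => (1-y) ^ s) (s * (1-x)^(s-1) * (0-1)) x := by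
    have h := Real.hasDerivAt_rpow_const (x := 1-x) (p := s) (Or.inl h1x.ne')
    exact h.comp x ((hasDerivAt_const x (1:ℝ)).sub (hasDerivAt_id x))
  have d3 : HasDerivAt (fun y => (PP n b k).eval y) ((PP n b k).derivative.eval x) x :=
    (PP n b k).hasDerivAt x
  have D := (d1.mul d2).mul d3
  convert D using 1
  · rfl
  · rfl
  · rfl
  have hrw1 : x^r = x^(r-1)*x := by
    rw [show r = (r-1)+1 by ring, Real.rpow_add hx0, Real.rpow_one]
    ring_nf
  have hrw2 : (1-x)^s = (1-x)^(s-1)*(1-x) := by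
    rw [show s = (s-1)+1 by ring, Real.rpow_add h1x, Real.rpow_one]
    ring_nf
  have hkn : (k:ℝ)+1 ≤ (n:ℝ) := by exact_mod_cast hk
  have hid := step_eval k (b+(n:ℝ)-k) (1/2+(n:ℝ)-k) x (by linarith)
  have e : PP n b (k+1) = hQ (k+1) (-(k:ℝ)-1) (b+(n:ℝ)-k-1) (1/2+(n:ℝ)-k-1) := by
    unfold PP
    congr 1 <;> push_cast <;> ring
  have epp : PP n b k = hQ k (-(k:ℝ)) (b+(n:ℝ)-k) (1/2+(n:ℝ)-k) := rfl
  rw [e, epp]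
  calc x ^ (r-1) * (1-x) ^ (s-1) *
        (r * (hQ (k+1) (-(k:ℝ)-1) (b+(n:ℝ)-k-1) (1/2+(n:ℝ)-k-1)).eval x)
      = x ^ (r-1) * (1-x) ^ (s-1) *
        ((1/2+(n:ℝ)-k-1) * (hQ (k+1) ((-(k:ℝ))-1) ((b+(n:ℝ)-k)-1) ((1/2+(n:ℝ)-k)-1)).eval x) := by
        rw [hr]; ring_nf
    _ = x ^ (r-1) * (1-x) ^ (s-1) *
        (((1/2+(n:ℝ)-k-1))*(1-x) - ((-(k:ℝ))+(b+(n:ℝ)-k)-(1/2+(n:ℝ)-k))*x) *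
          (hQ k (-(k:ℝ)) (b+(n:ℝ)-k) (1/2+(n:ℝ)-k)).eval x
        + x ^ (r-1) * (1-x) ^ (s-1) * (x*(1-x) *
          ((hQ k (-(k:ℝ)) (b+(n:ℝ)-k) (1/2+(n:ℝ)-k)).derivative.eval x)) := by
        rw [← hid]; ring
    _ = _ := by
        simp only [Pi.mul_apply]; rw [hrw1, hrw2, hr, hs]; ring

lemma roots_chain (n : ℕ) (b : ℝ) (hb : (n:ℝ) - 1/2 < b) :
    ∀ k, k ≤ n → ∃ T : Finset ℝ, T.card = k ∧ (↑T : Set ℝ) ⊆ Set.Ioo 0 1 ∧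
      ∀ x ∈ T, (PP n b k).eval x = 0 := by
  intro k
  induction k with
  | zero => exact fun _ => ⟨∅, by simp, by simp, by simp⟩
  | succ k ih =>
    intro hk1
    have hkn : k < n := hk1
    obtain ⟨T, hTc, hTsub, hTroot⟩ := ih hkn.le
    have hknR : (k:ℝ)+1 ≤ (n:ℝ) := by exact_mod_cast hkn
    have hr : (0:ℝ) < (n:ℝ)-k-1/2 := by linarith
    have hs : (0:ℝ) < b-(k:ℝ)-1/2 := by linarith
    set G : ℝ → ℝ :=
      fun y => y ^ ((n:ℝ)-k-1/2) * (1-y) ^ (b-(k:ℝ)-1/2) * (PP n b k).eval y with hGdef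
    have contG : Continuous G := by
      apply Continuous.mul
      apply Continuous.mul
      · exact continuous_iff_continuousAt.mpr
          (fun x => Real.continuousAt_rpow_const x _ (Or.inr hr.le))
      · have h1 : Continuous fun y : ℝ => 1 - y := continuous_const.sub continuous_id
        exact continuous_iff_continuousAt.mpr (fun x =>
          (Real.continuousAt_rpow_const (1-x) _ (Or.inr hs.le)).comp h1.continuousAt)
      · exact (PP n b k).continuous
    have hG0 : G 0 = 0 := by
      have h : G 0 = (0:ℝ) ^ ((n:ℝ)-k-1/2) * (1-0) ^ (b-(k:ℝ)-1/2) * (PP n b k).eval 0 := rfl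
      rw [h, Real.zero_rpow hr.ne']
      ring
    have hG1 : G 1 = 0 := by
      have h : G 1 = (1:ℝ) ^ ((n:ℝ)-k-1/2) * (1-1) ^ (b-(k:ℝ)-1/2) * (PP n b k).eval 1 := rfl
      rw [h, show (1:ℝ)-1 = 0 by ring, Real.zero_rpow hs.ne']
      ring
    -- the augmented finset
    have h0T : (0:ℝ) ∉ T := fun h => absurd (hTsub h).1 (lt_irrefl 0)
    have h1T : (1:ℝ) ∉ T := fun h => absurd (hTsub h).2 (lt_irrefl 1)
    set T' : Finset ℝ := insert 0 (insert 1 T) with hT'def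
    have hT'c : T'.card = k+2 := by
      rw [hT'def, Finset.card_insert_of_notMem, Finset.card_insert_of_notMem h1T, hTc]
      simp [h0T]
    have hT'sub : (↑T' : Set ℝ) ⊆ Set.Icc 0 1 := by
      intro x hx
      simp only [hT'def, Finset.coe_insert, Set.mem_insert_iff, Finset.mem_coe] at hx
      rcases hx with rfl | rfl | hx
      · exact Set.mem_Icc.2 ⟨le_refl 0, zero_le_one⟩
      · exact Set.mem_Icc.2 ⟨zero_le_one, le_refl 1⟩
      · exact ⟨(hTsub hx).1.le, (hTsub hx).2.le⟩
    have hT'zero : ∀ x ∈ T', G x = 0 := by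
      intro x hx
      simp only [hT'def, Finset.mem_insert] at hx
      rcases hx with rfl | rfl | hx
      · exact hG0
      · exact hG1
      · simp [hGdef, hTroot x hx]
    set ι := T'.orderIsoOfFin hT'c with hι
    have key : ∀ i : Fin (k+1), ∃ y,
        y ∈ Set.Ioo ((ι i.castSucc : ℝ)) ((ι i.succ : ℝ)) ∧
        (PP n b (k+1)).eval y = 0 := by
      intro i
      have hlt : ((ι i.castSucc : ℝ)) < ((ι i.succ : ℝ)) :=
        Subtype.coe_lt_coe.2 (ι.strictMono (Fin.castSucc_lt_succ (i := i)))
      have hu : ((ι i.castSucc : ℝ)) ∈ Set.Icc (0:ℝ) 1 :=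
        hT'sub (by exact_mod_cast (ι i.castSucc).2)
      have hv : ((ι i.succ : ℝ)) ∈ Set.Icc (0:ℝ) 1 :=
        hT'sub (by exact_mod_cast (ι i.succ).2)
      obtain ⟨y, hy, hy'⟩ := exists_hasDerivAt_eq_zero
        (f := G)
        (f' := fun x => x ^ ((n:ℝ)-k-1/2-1) * (1-x) ^ (b-(k:ℝ)-1/2-1) *
          (((n:ℝ)-k-1/2) * (PP n b (k+1)).eval x))
        hlt contG.continuousOn
        (by rw [hT'zero _ (ι i.castSucc).2, hT'zero _ (ι i.succ).2])
        (by
          intro x hx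
          have hx0 : 0 < x := lt_of_le_of_lt hu.1 hx.1
          have hx1 : x < 1 := lt_of_lt_of_le hx.2 hv.2
          exact G_hasDeriv n b k hkn hx0 hx1)
      refine ⟨y, hy, ?_⟩
      have hy0 : 0 < y := lt_of_le_of_lt hu.1 hy.1
      have hy1 : y < 1 := lt_of_lt_of_le hy.2 hv.2
      have p1 : (0:ℝ) < y ^ ((n:ℝ)-k-1/2-1) := Real.rpow_pos_of_pos hy0 _
      have p2 : (0:ℝ) < (1-y) ^ (b-(k:ℝ)-1/2-1) := Real.rpow_pos_of_pos (by linarith) _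
      have := hy'
      rcases mul_eq_zero.1 this with h | h
      · rcases mul_eq_zero.1 h with h' | h'
        · exact absurd h' p1.ne'
        · exact absurd h' p2.ne'
      · rcases mul_eq_zero.1 h with h' | h'
        · exact absurd h' hr.ne'
        · exact h'
    choose yy hyy hyroot using key
    have ymono : StrictMono yy := by
      intro i j hij
      have h1 : yy i < (ι i.succ : ℝ) := (hyy i).2
      have h2 : ((ι j.castSucc : ℝ)) < yy j := (hyy j).1
      have hle : i.succ ≤ j.castSucc := by
        rw [Fin.le_def]
        simp only [Fin.val_succ, Fin.coe_castSucc]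
        exact hij
      have : ((ι i.succ : ℝ)) ≤ ((ι j.castSucc : ℝ)) :=
        Subtype.coe_le_coe.2 (ι.monotone hle)
      linarith
    refine ⟨Finset.image yy Finset.univ, ?_, ?_, ?_⟩
    · rw [Finset.card_image_of_injective _ ymono.injective, Finset.card_univ,
        Fintype.card_fin]
    · intro x hx
      simp only [Finset.coe_image, Set.mem_image, Finset.coe_univ, Set.mem_univ,
        true_and] at hx
      obtain ⟨i, rfl⟩ := hx
      have hu : ((ι i.castSucc : ℝ)) ∈ Set.Icc (0:ℝ) 1 :=
        hT'sub (by exact_mod_cast (ι i.castSucc).2)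
      have hv : ((ι i.succ : ℝ)) ∈ Set.Icc (0:ℝ) 1 :=
        hT'sub (by exact_mod_cast (ι i.succ).2)
      exact ⟨lt_of_le_of_lt hu.1 (hyy i).1, lt_of_lt_of_le (hyy i).2 hv.2⟩
    · intro x hx
      simp only [Finset.mem_image, Finset.mem_univ, true_and] at hx
      obtain ⟨i, rfl⟩ := hx
      exact hyroot i

/-- For `b > n - 1/2`, all `n` zeros of `F(-n, b; 1/2; z)` are real, simple and
lie in `(0, 1)`. -/
theorem hypPoly_half_zeros_in_unit_interval (n : ℕ) (hn : 1 ≤ n) (b : ℝ)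
    (hb : (n : ℝ) - 1/2 < b) :
    Multiset.card (hypPoly n b (1/2)).roots = n ∧
    ∀ z ∈ (hypPoly n b (1/2)).roots,
      z.im = 0 ∧ 0 < z.re ∧ z.re < 1 ∧ (hypPoly n b (1/2)).rootMultiplicity z = 1 := by
  have hnR : (1:ℝ) ≤ (n:ℝ) := by exact_mod_cast hn
  have hb0 : (0:ℝ) < b := by linarith
  set P : ℝ[X] := hQ n (-(n:ℝ)) b (1/2) with hP
  have hPP : PP n b n = P := by
    unfold PP; congr 1 <;> ring
  have hAn : hA (-(n:ℝ)) b (1/2) n ≠ 0 := by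
    have h1 : pch n (-(n:ℝ)) = (-1)^n * n.factorial := pch_neg_self n
    have h2 : (0:ℝ) < pch n b := pch_pos hb0
    have h3 : (0:ℝ) < pch n (1/2) := pch_pos (by norm_num)
    have h4 : (0:ℝ) < (n.factorial : ℝ) := by positivity
    rw [hA, h1]
    apply div_ne_zero
    · exact mul_ne_zero (mul_ne_zero (pow_ne_zero _ (by norm_num)) h4.ne') h2.ne'
    · exact mul_ne_zero h3.ne' h4.ne'
  have hcoeff : ∀ j, P.coeff j = if j < n+1 then hA (-(n:ℝ)) b (1/2) j else 0 := by
    intro j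
    rw [hP, hQ, finset_sum_coeff]
    simp only [coeff_C_mul, coeff_X_pow, mul_ite, mul_one, mul_zero]
    rw [Finset.sum_ite_eq (Finset.range (n+1)) j (fun k => hA (-(n:ℝ)) b (1/2) k)]
    simp [Finset.mem_range]
  have hcn : P.coeff n ≠ 0 := by
    rw [hcoeff n, if_pos (by omega)]; exact hAn
  have hdeg : P.natDegree = n := by
    apply le_antisymm
    · apply natDegree_le_iff_coeff_eq_zero.2
      intro m hm
      rw [hcoeff m, if_neg (by omega)]
    · exact le_natDegree_of_ne_zero hcn
  have hPne : P ≠ 0 := fun h => hcn (by simp [h])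
  obtain ⟨T, hTc, hTsub, hTroot⟩ := roots_chain n b hb n le_rfl
  rw [hPP] at hTroot
  have hTsubroots : T ⊆ P.roots.toFinset := fun x hx =>
    Multiset.mem_toFinset.2 (mem_roots'.2 ⟨hPne, hTroot x hx⟩)
  have hle1 : n ≤ P.roots.toFinset.card := hTc ▸ Finset.card_le_card hTsubroots
  have hle2 : P.roots.toFinset.card ≤ Multiset.card P.roots := Multiset.toFinset_card_le _
  have hle3 : Multiset.card P.roots ≤ n := hdeg ▸ P.card_roots'
  have hcard : Multiset.card P.roots = n := le_antisymm hle3 (hle1.trans hle2)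
  have htfcard : P.roots.toFinset.card = n := le_antisymm (hle2.trans_eq hcard) hle1
  have hTeq : T = P.roots.toFinset :=
    Finset.eq_of_subset_of_card_le hTsubroots (by omega)
  have hcount1 : ∀ x ∈ P.roots, P.roots.count x = 1 := by
    intro x hx
    by_contra hne
    have h2 : 2 ≤ P.roots.count x := by
      have := Multiset.one_le_count_iff_mem.2 hx
      omega
    have hlt : ∑ _z ∈ P.roots.toFinset, 1 < ∑ z ∈ P.roots.toFinset, P.roots.count z := by
      apply Finset.sum_lt_sum
      · intro i hi
        exact Multiset.one_le_count_iff_mem.2 (Multiset.mem_toFinset.1 hi)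
      · exact ⟨x, Multiset.mem_toFinset.2 hx, by omega⟩
    rw [Multiset.toFinset_sum_count_eq, Finset.sum_const, smul_eq_mul, mul_one,
      htfcard, hcard] at hlt
    omega
  have hroots_mem : ∀ x ∈ P.roots, x ∈ Set.Ioo (0:ℝ) 1 := by
    intro x hx
    apply hTsub
    rw [hTeq]
    exact Finset.mem_coe.2 (Multiset.mem_toFinset.2 hx)
  have hsplit : P.Splits := splits_iff_card_roots.2 (hcard.trans hdeg.symm)
  have hmap : hypPoly n b (1/2) = P.map (algebraMap ℝ ℂ) := by
    rw [hP, hQ, Polynomial.map_sum]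
    unfold hypPoly
    apply Finset.sum_congr rfl
    intro k _
    rw [Polynomial.map_mul, Polynomial.map_pow, map_X, map_C]
    norm_num [hA, pch]
  have hroots_map : (hypPoly n b (1/2)).roots
      = P.roots.map (algebraMap ℝ ℂ) := by
    rw [hmap]
    exact hsplit.roots_map _
  constructor
  · rw [hroots_map, Multiset.card_map, hcard]
  · intro z hz
    rw [hroots_map, Multiset.mem_map] at hz
    obtain ⟨x, hx, rfl⟩ := hz
    have hxm := hroots_mem x hx
    refine ⟨by simp, by simpa using hxm.1, by simpa using hxm.2, ?_⟩
    rw [← Polynomial.count_roots, hroots_map]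
    have : (algebraMap ℝ ℂ) = (Complex.ofReal : ℝ → ℂ) := rfl
    rw [show ⇑(algebraMap ℝ ℂ) = (Complex.ofReal : ℝ → ℂ) from rfl]
    rw [Multiset.count_map_eq_count' _ _ Complex.ofReal_injective]
    exact hcount1 x hx
end

section
/- Let n ≥ 1 be an integer and let b ∈ ℝ with b > 0. If n is even, then all n zeros of F(−n, b; −2n; z) are non-real. If n is odd, then F(−n, b; −2n; z) has exactly one real zero, which is negative, and the remaining n − 1 zeros are all non-real. -/
open Polynomial
open scoped Classical

open MeasureTheory Set Real

lemma integrableOn_exp_rpow_pow (c : ℝ) (hc : 0 < c) (k : ℕ) :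
    IntegrableOn (fun s : ℝ => exp (-s) * s ^ (c - 1) * s ^ k) (Ioi 0) := by
  have h := Real.GammaIntegral_convergent (show (0:ℝ) < c + k by positivity)
  refine h.congr_fun (fun s hs => ?_) measurableSet_Ioi
  have hs' : (0:ℝ) < s := hs
  rw [mul_assoc, ← Real.rpow_natCast s k, ← Real.rpow_add hs']
  ring_nf

lemma integral_exp_rpow_pow (c : ℝ) (hc : 0 < c) (k : ℕ) :
    ∫ s in Ioi (0:ℝ), exp (-s) * s ^ (c - 1) * s ^ k = Real.Gamma (c + k) := by
  rw [Real.Gamma_eq_integral (show (0:ℝ) < c + k by positivity)]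
  refine setIntegral_congr_fun measurableSet_Ioi (fun s hs => ?_)
  have hs' : (0:ℝ) < s := hs
  rw [mul_assoc, ← Real.rpow_natCast s k, ← Real.rpow_add hs']
  ring_nf

lemma integrableOn_exp_pow (j : ℕ) :
    IntegrableOn (fun t : ℝ => exp (-t) * t ^ j) (Ioi 0) := by
  have h := Real.GammaIntegral_convergent (show (0:ℝ) < (j:ℝ) + 1 by positivity)
  refine h.congr_fun (fun t ht => ?_) measurableSet_Ioi
  have ht' : (0:ℝ) < t := ht
  simp only [add_sub_cancel_right, Real.rpow_natCast]

lemma integral_exp_pow (j : ℕ) :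
    ∫ t in Ioi (0:ℝ), exp (-t) * t ^ j = (j.factorial : ℝ) := by
  rw [← Real.Gamma_nat_eq_factorial,
    Real.Gamma_eq_integral (show (0:ℝ) < (j:ℝ) + 1 by positivity)]
  refine setIntegral_congr_fun measurableSet_Ioi (fun t ht => ?_)
  have ht' : (0:ℝ) < t := ht
  rw [add_sub_cancel_right, Real.rpow_natCast]

lemma keySumPos (m N : ℕ) (hm : Even m) (hmN : m ≤ N) (b : ℝ) (hb : 0 < b) (x : ℝ) :
    0 < ∑ k ∈ Finset.range (m + 1),
      (m.choose k : ℝ) * Real.Gamma (b + k) * ((N - k).factorial : ℝ) * x ^ k := by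
  set f : ℝ → ℝ → ℝ := fun t s => exp (-s) * s ^ (b - 1) * (t + s * x) ^ m with hf
  have hexpand : ∀ t s : ℝ, f t s
      = ∑ k ∈ Finset.range (m + 1),
          ((m.choose k : ℝ) * x ^ k * t ^ (m - k)) * (exp (-s) * s ^ (b - 1) * s ^ k) := by
    intro t s
    rw [hf]
    simp only
    rw [show t + s * x = s * x + t by ring, add_pow, Finset.mul_sum]
    refine Finset.sum_congr rfl fun k hk => ?_
    rw [mul_pow]; ring
  have hinnerInt : ∀ t : ℝ, IntegrableOn (fun s => f t s) (Ioi 0) := by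
    intro t
    rw [show (fun s => f t s) = fun s => ∑ k ∈ Finset.range (m + 1),
      ((m.choose k : ℝ) * x ^ k * t ^ (m - k)) * (exp (-s) * s ^ (b - 1) * s ^ k)
      from funext (hexpand t)]
    exact integrable_finset_sum _ fun k hk => (integrableOn_exp_rpow_pow b hb k).const_mul _
  have hinnerVal : ∀ t : ℝ, ∫ s in Ioi (0:ℝ), f t s
      = ∑ k ∈ Finset.range (m + 1),
          ((m.choose k : ℝ) * x ^ k * t ^ (m - k)) * Real.Gamma (b + k) := by
    intro t
    rw [show (fun s => f t s) = fun s => ∑ k ∈ Finset.range (m + 1),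
      ((m.choose k : ℝ) * x ^ k * t ^ (m - k)) * (exp (-s) * s ^ (b - 1) * s ^ k)
      from funext (hexpand t)]
    rw [integral_finset_sum _ fun k hk => (integrableOn_exp_rpow_pow b hb k).const_mul _]
    refine Finset.sum_congr rfl fun k hk => ?_
    rw [integral_const_mul _ _, integral_exp_rpow_pow b hb k]
  have hinnerPos : ∀ t : ℝ, 0 < t → 0 < ∫ s in Ioi (0:ℝ), f t s := by
    intro t ht
    rw [setIntegral_pos_iff_support_of_nonneg_ae ?_ (hinnerInt t)]
    · set cpt : ℝ := if x = 0 then -1 else -t / x with hcpt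
      have hsub : Ioi (0:ℝ) \ {cpt} ⊆ Function.support (f t) ∩ Ioi 0 := by
        rintro s ⟨hs, hsne⟩
        have hs' : (0:ℝ) < s := hs
        refine ⟨Function.mem_support.mpr ?_, hs⟩
        have hne : t + s * x ≠ 0 := by
          by_cases hx : x = 0
          · simpa [hx] using ne_of_gt ht
          · intro h0
            apply hsne
            have : s = -t / x := by
              rw [eq_div_iff hx]; linarith
            simp only [hcpt, if_neg hx, Set.mem_singleton_iff]
            exact this
        have h1 : 0 < exp (-s) * s ^ (b - 1) := by positivity
        exact ne_of_gt (mul_pos h1 (hm.pow_pos hne))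
      calc (0:ENNReal) < volume (Ioi (0:ℝ) \ {cpt}) := by
            rw [measure_diff_null (measure_singleton cpt)]
            simp [Real.volume_Ioi]
        _ ≤ volume (Function.support (f t) ∩ Ioi 0) := measure_mono hsub
    · filter_upwards [ae_restrict_mem measurableSet_Ioi] with s hs
      have hs' : (0:ℝ) < s := hs
      exact mul_nonneg (mul_nonneg (exp_pos _).le (Real.rpow_nonneg hs'.le _))
        (hm.pow_nonneg _)
  -- outer integral
  set G : ℝ → ℝ := fun t => ∑ k ∈ Finset.range (m + 1),
      ((m.choose k : ℝ) * x ^ k * Real.Gamma (b + k)) * (exp (-t) * t ^ (N - k)) with hG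
  have houterfun : ∀ t : ℝ, 0 < t →
      G t = exp (-t) * t ^ (N - m) * ∫ s in Ioi (0:ℝ), f t s := by
    intro t ht
    rw [hinnerVal t, Finset.mul_sum, hG]
    refine Finset.sum_congr rfl fun k hk => ?_
    have hk' : k ≤ m := Nat.lt_succ_iff.mp (Finset.mem_range.mp hk)
    have hpow : t ^ (N - m) * t ^ (m - k) = t ^ (N - k) := by
      rw [← pow_add]; congr 1; omega
    rw [show exp (-t) * t ^ (N - m) * ((↑(m.choose k) * x ^ k * t ^ (m - k)) * Real.Gamma (b + k))
        = (↑(m.choose k) * x ^ k * Real.Gamma (b + k)) * (exp (-t) * (t ^ (N - m) * t ^ (m - k)))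
      by ring, hpow]
  have houterInt : IntegrableOn G (Ioi 0) := by
    rw [hG]
    exact integrable_finset_sum _ fun k hk => (integrableOn_exp_pow (N - k)).const_mul _
  have houterVal : ∫ t in Ioi (0:ℝ), G t
      = ∑ k ∈ Finset.range (m + 1),
          ((m.choose k : ℝ) * x ^ k * Real.Gamma (b + k)) * ((N - k).factorial : ℝ) := by
    rw [hG]
    rw [integral_finset_sum _ fun k hk => (integrableOn_exp_pow (N - k)).const_mul _]
    refine Finset.sum_congr rfl fun k hk => ?_
    rw [integral_const_mul _ _, integral_exp_pow (N - k)]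
  have houterPos : 0 < ∫ t in Ioi (0:ℝ), G t := by
    rw [setIntegral_pos_iff_support_of_nonneg_ae ?_ houterInt]
    · refine lt_of_lt_of_le ?_ (measure_mono (show Ioi (0:ℝ) ⊆ Function.support G ∩ Ioi 0 from
        fun t ht => ⟨Function.mem_support.mpr (by
          have ht' : (0:ℝ) < t := ht
          rw [houterfun t ht']
          exact ne_of_gt (mul_pos (by positivity) (hinnerPos t ht'))), ht⟩))
      simp [Real.volume_Ioi]
    · filter_upwards [ae_restrict_mem measurableSet_Ioi] with t ht
      have ht' : (0:ℝ) < t := ht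
      rw [houterfun t ht']
      exact le_of_lt (mul_pos (by positivity) (hinnerPos t ht'))
  rw [show (∑ k ∈ Finset.range (m+1), (m.choose k:ℝ) * Real.Gamma (b+(k:ℝ)) * ((N-k).factorial:ℝ) * x^k)
      = ∑ k ∈ Finset.range (m+1), ((m.choose k:ℝ) * x^k * Real.Gamma (b+(k:ℝ))) * ((N-k).factorial:ℝ)
    from Finset.sum_congr rfl fun k hk => by ring, ← houterVal]
  exact houterPos

lemma ascPoch_eval_succ_left (k : ℕ) (b : ℝ) :
    (ascPochhammer ℝ (k + 1)).eval b = b * (ascPochhammer ℝ k).eval (b + 1) := by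
  rw [ascPochhammer_succ_left]
  simp [Polynomial.eval_comp]

lemma Gamma_add_nat (b : ℝ) (hb : 0 < b) (k : ℕ) :
    Real.Gamma (b + k) = (ascPochhammer ℝ k).eval b * Real.Gamma b := by
  induction k with
  | zero => simp
  | succ k ih =>
    have hbk : b + (k : ℝ) ≠ 0 := by positivity
    rw [show b + ((k + 1 : ℕ) : ℝ) = (b + k) + 1 by push_cast; ring,
      Real.Gamma_add_one hbk, ih, ascPochhammer_succ_eval]
    ring

noncomputable def pochCoeff (n : ℕ) (b : ℝ) (k : ℕ) : ℝ :=
  ((n.descFactorial k : ℝ) * (ascPochhammer ℝ k).eval b) /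
    (((2 * n).descFactorial k : ℝ) * (k.factorial : ℝ))

noncomputable def Qr (n : ℕ) (b : ℝ) : Polynomial ℝ :=
  ∑ k ∈ Finset.range (n + 1), Polynomial.C (pochCoeff n b k) * Polynomial.X ^ k

lemma descFactorial_pos' {k n : ℕ} (hk : k ≤ n) : 0 < n.descFactorial k :=
  Nat.pos_of_ne_zero fun h =>
    absurd (Nat.descFactorial_eq_zero_iff_lt.mp h) (not_lt.mpr hk)

lemma pochCoeff_pos {n k : ℕ} (hk : k ≤ n) {b : ℝ} (hb : 0 < b) :
    0 < pochCoeff n b k := by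
  have h1 : (0:ℝ) < (n.descFactorial k : ℝ) := by
    exact_mod_cast descFactorial_pos' hk
  have h2 : (0:ℝ) < ((2 * n).descFactorial k : ℝ) := by
    exact_mod_cast descFactorial_pos' (show k ≤ 2 * n by omega)
  have h3 : (0:ℝ) < ((k.factorial : ℕ) : ℝ) := by exact_mod_cast k.factorial_pos
  exact div_pos (mul_pos h1 (ascPochhammer_pos k b hb)) (mul_pos h2 h3)

lemma Qr_coeff (n : ℕ) (b : ℝ) (k : ℕ) :
    (Qr n b).coeff k = if k ≤ n then pochCoeff n b k else 0 := by
  rw [Qr, Polynomial.finset_sum_coeff]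
  simp only [Polynomial.coeff_C_mul, Polynomial.coeff_X_pow, mul_ite, mul_one, mul_zero]
  rw [Finset.sum_ite_eq (Finset.range (n + 1)) k (fun j => pochCoeff n b j)]
  simp [Nat.lt_succ_iff]

lemma Qr_eval (n : ℕ) (b : ℝ) (x : ℝ) :
    (Qr n b).eval x = ∑ k ∈ Finset.range (n + 1), pochCoeff n b k * x ^ k := by
  rw [Qr, Polynomial.eval_finset_sum]
  simp

lemma Qr_natDegree (n : ℕ) {b : ℝ} (hb : 0 < b) : (Qr n b).natDegree = n := by
  apply Polynomial.natDegree_eq_of_le_of_coeff_ne_zero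
  · apply Polynomial.natDegree_sum_le_of_forall_le
    intro k hk
    refine (Polynomial.natDegree_C_mul_le _ _).trans ?_
    rw [Polynomial.natDegree_X_pow]
    exact Nat.lt_succ_iff.mp (Finset.mem_range.mp hk)
  · rw [Qr_coeff, if_pos le_rfl]
    exact ne_of_gt (pochCoeff_pos le_rfl hb)

lemma Qr_deriv_eval (n : ℕ) (b : ℝ) (x : ℝ) :
    (Qr n b).derivative.eval x
      = ∑ j ∈ Finset.range n, ((j : ℝ) + 1) * pochCoeff n b (j + 1) * x ^ j := by
  rw [Qr, Polynomial.derivative_sum]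
  simp only [Polynomial.derivative_C_mul_X_pow]
  rw [Polynomial.eval_finset_sum, Finset.sum_range_succ']
  simp only [Polynomial.eval_mul, Polynomial.eval_C, Polynomial.eval_pow, Polynomial.eval_X]
  rw [show (pochCoeff n b 0 * (0:ℕ)) * x ^ (0 - 1) = 0 by simp]
  rw [add_zero]
  refine Finset.sum_congr rfl fun j hj => ?_
  push_cast
  ring_nf

lemma nat_ident1 (n k : ℕ) (hk : k ≤ n) :
    n.descFactorial k * (2 * n).factorial
      = n.choose k * (2 * n - k).factorial * ((2 * n).descFactorial k * k.factorial) := by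
  have hk2 : k ≤ 2 * n := by omega
  have h1 : n.descFactorial k = n.choose k * k.factorial := by
    have a1 := Nat.choose_mul_factorial_mul_factorial hk
    have a2 := Nat.factorial_mul_descFactorial hk
    refine Nat.eq_of_mul_eq_mul_left (Nat.factorial_pos (n - k)) ?_
    rw [a2, ← a1]; ring
  have h2 := Nat.factorial_mul_descFactorial hk2
  rw [h1, ← h2]; ring

lemma nat_ident2 (n j : ℕ) (hn : 1 ≤ n) (hj : j + 1 ≤ n) :
    (j + 1) * n.descFactorial (j + 1) * (2 * n).factorial
      = (n * (n - 1).choose j) * (2 * n - 1 - j).factorial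
        * ((2 * n).descFactorial (j + 1) * (j + 1).factorial) := by
  have h1 : n.descFactorial (j + 1) = n.choose (j + 1) * (j + 1).factorial := by
    have a1 := Nat.choose_mul_factorial_mul_factorial hj
    have a2 := Nat.factorial_mul_descFactorial hj
    refine Nat.eq_of_mul_eq_mul_left (Nat.factorial_pos (n - (j + 1))) ?_
    rw [a2, ← a1]; ring
  have h3 : n * (n - 1).choose j = n.choose (j + 1) * (j + 1) := by
    have := Nat.add_one_mul_choose_eq (n - 1) j
    rw [show n - 1 + 1 = n from by omega] at this
    simpa [Nat.succ_eq_add_one] using this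
  have hk2 : j + 1 ≤ 2 * n := by omega
  have h2 := Nat.factorial_mul_descFactorial hk2
  rw [show 2 * n - (j + 1) = 2 * n - 1 - j from by omega] at h2
  rw [h1, h3, ← h2]; ring

lemma coeff_ident1 (n k : ℕ) (hk : k ≤ n) {b : ℝ} (hb : 0 < b) :
    pochCoeff n b k * (((2 * n).factorial : ℝ) * Real.Gamma b)
      = (n.choose k : ℝ) * Real.Gamma (b + k) * ((2 * n - k).factorial : ℝ) := by
  have hD2 : (((2 * n).descFactorial k : ℕ) : ℝ) ≠ 0 := by
    exact_mod_cast (descFactorial_pos' (show k ≤ 2 * n by omega)).ne'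
  have hfac : ((k.factorial : ℕ) : ℝ) ≠ 0 := by exact_mod_cast k.factorial_pos.ne'
  rw [pochCoeff, Gamma_add_nat b hb k, div_mul_eq_mul_div,
    div_eq_iff (mul_ne_zero hD2 hfac)]
  have hnat : ((n.descFactorial k : ℝ) * ((2 * n).factorial : ℝ))
      = (n.choose k : ℝ) * ((2 * n - k).factorial : ℝ)
        * (((2 * n).descFactorial k : ℝ) * (k.factorial : ℝ)) := by
    exact_mod_cast congrArg (Nat.cast (R := ℝ)) (nat_ident1 n k hk)
  linear_combination ((ascPochhammer ℝ k).eval b * Real.Gamma b) * hnat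

lemma coeff_ident2 (n j : ℕ) (hn : 1 ≤ n) (hj : j + 1 ≤ n) {b : ℝ} (hb : 0 < b) :
    ((j : ℝ) + 1) * pochCoeff n b (j + 1) * (((2 * n).factorial : ℝ) * Real.Gamma (b + 1))
      = ((n : ℝ) * b) * (((n - 1).choose j : ℝ) * Real.Gamma ((b + 1) + j)
          * ((2 * n - 1 - j).factorial : ℝ)) := by
  have hD2 : (((2 * n).descFactorial (j + 1) : ℕ) : ℝ) ≠ 0 := by
    exact_mod_cast (descFactorial_pos' (show j + 1 ≤ 2 * n by omega)).ne'
  have hfac : (((j + 1).factorial : ℕ) : ℝ) ≠ 0 := by exact_mod_cast (j + 1).factorial_pos.ne'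
  rw [pochCoeff, ascPoch_eval_succ_left, Gamma_add_nat (b + 1) (by linarith) j,
    mul_div_assoc', div_mul_eq_mul_div, div_eq_iff (mul_ne_zero hD2 hfac)]
  have hnat : ((j : ℝ) + 1) * (n.descFactorial (j + 1) : ℝ) * ((2 * n).factorial : ℝ)
      = ((n : ℝ) * ((n - 1).choose j : ℝ)) * ((2 * n - 1 - j).factorial : ℝ)
        * (((2 * n).descFactorial (j + 1) : ℝ) * (((j + 1).factorial : ℕ) : ℝ)) := by
    have := congrArg (Nat.cast (R := ℝ)) (nat_ident2 n j hn hj)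
    push_cast at this
    linarith [this]
  linear_combination (b * ((ascPochhammer ℝ j).eval (b + 1)) * Real.Gamma (b + 1)) * hnat

lemma Qr_eval_pos (n : ℕ) (hne : Even n) {b : ℝ} (hb : 0 < b) (x : ℝ) :
    0 < (Qr n b).eval x := by
  have hS := keySumPos n (2 * n) hne (by omega) b hb x
  have hconst : (0:ℝ) < ((2 * n).factorial : ℝ) * Real.Gamma b :=
    mul_pos (by positivity) (Real.Gamma_pos_of_pos hb)
  have heq : (Qr n b).eval x * (((2 * n).factorial : ℝ) * Real.Gamma b)
      = ∑ k ∈ Finset.range (n + 1),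
          (n.choose k : ℝ) * Real.Gamma (b + k) * ((2 * n - k).factorial : ℝ) * x ^ k := by
    rw [Qr_eval, Finset.sum_mul]
    refine Finset.sum_congr rfl fun k hk => ?_
    have hk' : k ≤ n := Nat.lt_succ_iff.mp (Finset.mem_range.mp hk)
    linear_combination x ^ k * coeff_ident1 n k hk' hb
  rw [← heq] at hS
  rcases mul_pos_iff.mp hS with ⟨h1, _⟩ | ⟨_, h2⟩
  · exact h1
  · linarith

lemma Qr_deriv_pos (n : ℕ) (hn : 1 ≤ n) (hno : Odd n) {b : ℝ} (hb : 0 < b) (x : ℝ) :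
    0 < (Qr n b).derivative.eval x := by
  have hev : Even (n - 1) := Nat.Odd.sub_odd hno odd_one
  have hS := keySumPos (n - 1) (2 * n - 1) hev (by omega) (b + 1) (by linarith) x
  rw [show n - 1 + 1 = n from by omega] at hS
  have hconst : (0:ℝ) < ((2 * n).factorial : ℝ) * Real.Gamma (b + 1) :=
    mul_pos (by positivity) (Real.Gamma_pos_of_pos (by linarith))
  have heq : (Qr n b).derivative.eval x * (((2 * n).factorial : ℝ) * Real.Gamma (b + 1))
      = ((n : ℝ) * b) * ∑ j ∈ Finset.range n,
          ((n - 1).choose j : ℝ) * Real.Gamma ((b + 1) + j)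
            * ((2 * n - 1 - j).factorial : ℝ) * x ^ j := by
    rw [Qr_deriv_eval, Finset.sum_mul, Finset.mul_sum]
    refine Finset.sum_congr rfl fun j hj => ?_
    have hj' : j + 1 ≤ n := Finset.mem_range.mp hj
    linear_combination x ^ j * coeff_ident2 n j hn hj' hb
  have hnpos : (0:ℝ) < (n : ℝ) := by exact_mod_cast hn
  have hS' : 0 < (Qr n b).derivative.eval x
      * (((2 * n).factorial : ℝ) * Real.Gamma (b + 1)) := by
    rw [heq]; exact mul_pos (by positivity) hS
  rcases mul_pos_iff.mp hS' with ⟨h1, _⟩ | ⟨_, h2⟩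
  · exact h1
  · linarith

lemma hypPoly_eq_map (n : ℕ) (b : ℝ) :
    hypPoly n b (-(2 * n : ℝ)) = (Qr n b).map (algebraMap ℝ ℂ) := by
  rw [hypPoly, Qr, Polynomial.map_sum]
  refine Finset.sum_congr rfl fun k hk => ?_
  have hk' : k ≤ n := Nat.lt_succ_iff.mp (Finset.mem_range.mp hk)
  rw [Polynomial.map_mul, Polynomial.map_C, Polynomial.map_pow, Polynomial.map_X]
  congr 1
  rw [show (algebraMap ℝ ℂ) (pochCoeff n b k) = ((pochCoeff n b k : ℝ) : ℂ)
    from congrFun Complex.coe_algebraMap _]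
  congr 1
  have h1 : (ascPochhammer ℝ k).eval (-(n : ℝ)) = (-1) ^ k * (n.descFactorial k : ℝ) := by
    rw [ascPochhammer_eval_neg_eq_descPochhammer, descPochhammer_eval_eq_descFactorial]
  have h2 : (ascPochhammer ℝ k).eval (-(2 * n : ℝ))
      = (-1) ^ k * ((2 * n).descFactorial k : ℝ) := by
    rw [show -(2 * (n:ℝ)) = -(((2 * n : ℕ)):ℝ) by push_cast; ring,
      ascPochhammer_eval_neg_eq_descPochhammer, descPochhammer_eval_eq_descFactorial]
  have hD2 : (((2 * n).descFactorial k : ℕ) : ℝ) ≠ 0 := by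
    exact_mod_cast (descFactorial_pos' (show k ≤ 2 * n by omega)).ne'
  have hfac : ((k.factorial : ℕ) : ℝ) ≠ 0 := by exact_mod_cast k.factorial_pos.ne'
  have hneg : ((-1 : ℝ)) ^ k ≠ 0 := pow_ne_zero _ (by norm_num)
  rw [h1, h2, pochCoeff]
  field_simp

/-- Zero distribution of `F(-n, b; -2n; z)` for `b > 0`. -/
theorem hypPoly_neg2n_zeros_b_pos (n : ℕ) (hn : 1 ≤ n) (b : ℝ) (hb : 0 < b) :
    (Even n →
      Multiset.card (hypPoly n b (-(2 * n : ℝ))).roots = n ∧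
      ∀ z ∈ (hypPoly n b (-(2 * n : ℝ))).roots, z.im ≠ 0) ∧
    (Odd n →
      countIn (hypPoly n b (-(2 * n : ℝ))) {z | z.im = 0} = 1 ∧
      countIn (hypPoly n b (-(2 * n : ℝ))) {z | z.im = 0 ∧ z.re < 0} = 1 ∧
      countIn (hypPoly n b (-(2 * n : ℝ))) {z | z.im ≠ 0} = n - 1) := by
  have hmap : hypPoly n b (-(2 * n : ℝ)) = (Qr n b).map (algebraMap ℝ ℂ) := hypPoly_eq_map n b
  set Q := Qr n b with hQdef
  have hQdeg : Q.natDegree = n := Qr_natDegree n hb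
  have hQ0 : Q ≠ 0 := fun h => by
    rw [h] at hQdeg; simp at hQdeg; omega
  have hcard : Multiset.card (Q.map (algebraMap ℝ ℂ)).roots = n := by
    have hsp := (Polynomial.splits_iff_card_roots
      (f := Q.map (algebraMap ℝ ℂ))).mp (IsAlgClosed.splits _)
    rw [hsp, Polynomial.natDegree_map, hQdeg]
  have evalreal : ∀ x : ℝ, (Q.map (algebraMap ℝ ℂ)).eval ((x : ℝ) : ℂ)
      = ((Q.eval x : ℝ) : ℂ) := by
    intro x
    rw [Polynomial.eval_map, show ((x : ℝ) : ℂ) = algebraMap ℝ ℂ x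
      from (congrFun Complex.coe_algebraMap x).symm, Polynomial.eval₂_at_apply]
    exact congrFun Complex.coe_algebraMap _
  constructor
  · -- even case
    intro hne
    have hpos := fun x => Qr_eval_pos n hne hb x
    constructor
    · rw [hmap]; exact hcard
    · intro z hz h0
      rw [hmap] at hz
      have hroot : (Q.map (algebraMap ℝ ℂ)).IsRoot z := (Polynomial.mem_roots'.mp hz).2
      have hz' : z = ((z.re : ℝ) : ℂ) := Complex.ext (by simp) (by simp [h0])
      rw [hz', Polynomial.IsRoot, evalreal] at hroot
      exact (ne_of_gt (hpos z.re)) (by exact_mod_cast hroot)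
  · -- odd case
    intro hno
    have hder := fun x => Qr_deriv_pos n hn hno hb x
    have hmono : StrictMono (fun x => Q.eval x) := by
      apply strictMono_of_deriv_pos
      intro x
      rw [Polynomial.deriv]
      exact hder x
    have heval0 : Q.eval 0 = 1 := by
      rw [← Polynomial.coeff_zero_eq_eval_zero, hQdef, Qr_coeff, if_pos (by omega)]
      simp [pochCoeff]
    obtain ⟨y, hy⟩ : ∃ y : ℝ, Q.eval y < 0 := by
      set Qc := Q.comp (-X) with hQc
      have hQc0 : Qc ≠ 0 := by
        intro h
        have := Polynomial.natDegree_comp (p := Q) (q := (-X : Polynomial ℝ))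
        rw [← hQc, h] at this
        simp [hQdeg] at this
        omega
      have hdegc : Qc.natDegree = n := by
        rw [hQc, Polynomial.natDegree_comp]
        simp [hQdeg]
      have hlc : Q.leadingCoeff = pochCoeff n b n := by
        rw [Polynomial.leadingCoeff, hQdeg, hQdef, Qr_coeff, if_pos le_rfl]
      have hlcc : Qc.leadingCoeff ≤ 0 := by
        rw [hQc, Polynomial.leadingCoeff_comp (by simp)]
        have : (-X : Polynomial ℝ).leadingCoeff = -1 := by
          simp [Polynomial.leadingCoeff_neg]
        rw [this, hlc, Odd.neg_one_pow (by rwa [hQdeg])]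
        have := pochCoeff_pos (le_refl n) hb
        nlinarith
      have hdegc' : 0 < Qc.degree := by
        rw [Polynomial.degree_eq_natDegree hQc0, hdegc]
        exact_mod_cast hn
      have htend := Polynomial.tendsto_atBot_of_leadingCoeff_nonpos Qc hdegc' hlcc
      obtain ⟨y, hy⟩ := (htend.eventually (Filter.eventually_lt_atBot (0 : ℝ))).exists
      refine ⟨-y, ?_⟩
      rwa [hQc, Polynomial.eval_comp, Polynomial.eval_neg, Polynomial.eval_X] at hy
    have hy0 : y < 0 := by
      apply hmono.lt_iff_lt.mp
      show Q.eval y < Q.eval 0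
      rw [heval0]; linarith
    obtain ⟨x₀, hx₀mem, hx₀⟩ : ∃ x₀ ∈ Set.Icc y 0, Q.eval x₀ = 0 := by
      have hcont : ContinuousOn (fun x => Q.eval x) (Set.Icc y 0) :=
        (Polynomial.continuous (p := Q)).continuousOn
      have h0mem : (0 : ℝ) ∈ Set.Icc (Q.eval y) (Q.eval 0) :=
        ⟨hy.le, by rw [heval0]; norm_num⟩
      obtain ⟨x₀, hmem, hval⟩ := intermediate_value_Icc (le_of_lt hy0) hcont h0mem
      exact ⟨x₀, hmem, hval⟩
    have hx₀neg : x₀ < 0 := by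
      apply hmono.lt_iff_lt.mp
      show Q.eval x₀ < Q.eval 0
      rw [hx₀, heval0]; norm_num
    have huniq : ∀ t : ℝ, Q.eval t = 0 → t = x₀ := fun t ht =>
      hmono.injective (show Q.eval t = Q.eval x₀ by rw [ht, hx₀])
    set R := Q /ₘ (X - C x₀) with hRdef
    have hQR : (X - C x₀) * R = Q := (Polynomial.mul_divByMonic_eq_iff_isRoot).mpr hx₀
    have hR0 : R ≠ 0 := fun h => by
      rw [h, mul_zero] at hQR; exact hQ0 hQR.symm
    have hRx₀ : R.eval x₀ ≠ 0 := by
      have hdQ : Q.derivative = R + (X - C x₀) * R.derivative := by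
        rw [← hQR, Polynomial.derivative_mul, Polynomial.derivative_X_sub_C, one_mul]
      have hev : Q.derivative.eval x₀ = R.eval x₀ := by rw [hdQ]; simp
      rw [← hev]; exact (hder x₀).ne'
    have hRreal : ∀ t : ℝ, R.eval t ≠ 0 := by
      intro t ht
      by_cases hteq : t = x₀
      · rw [hteq] at ht; exact hRx₀ ht
      · apply hteq
        apply huniq
        rw [← hQR]; simp [ht]
    have hmapQ : Q.map (algebraMap ℝ ℂ)
        = (X - C ((x₀ : ℝ) : ℂ)) * R.map (algebraMap ℝ ℂ) := by
      rw [← hQR, Polynomial.map_mul, Polynomial.map_sub, Polynomial.map_X, Polynomial.map_C]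
      rw [show (algebraMap ℝ ℂ) x₀ = ((x₀ : ℝ) : ℂ) from congrFun Complex.coe_algebraMap _]
    have hmapR0 : R.map (algebraMap ℝ ℂ) ≠ 0 := Polynomial.map_ne_zero hR0
    have hrootsQ : (Q.map (algebraMap ℝ ℂ)).roots
        = ((x₀ : ℝ) : ℂ) ::ₘ (R.map (algebraMap ℝ ℂ)).roots := by
      rw [hmapQ, Polynomial.roots_mul (mul_ne_zero (Polynomial.X_sub_C_ne_zero _) hmapR0),
        Polynomial.roots_X_sub_C]
      rfl
    have hRim : ∀ z ∈ (R.map (algebraMap ℝ ℂ)).roots, z.im ≠ 0 := by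
      intro z hz h0
      have hroot := (Polynomial.mem_roots'.mp hz).2
      have hz' : z = ((z.re : ℝ) : ℂ) := Complex.ext (by simp) (by simp [h0])
      have evalrealR : (R.map (algebraMap ℝ ℂ)).eval ((z.re : ℝ) : ℂ)
          = ((R.eval z.re : ℝ) : ℂ) := by
        rw [Polynomial.eval_map, show ((z.re : ℝ) : ℂ) = algebraMap ℝ ℂ z.re
          from (congrFun Complex.coe_algebraMap z.re).symm, Polynomial.eval₂_at_apply]
        exact congrFun Complex.coe_algebraMap _
      rw [hz', Polynomial.IsRoot, evalrealR] at hroot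
      exact hRreal z.re (by exact_mod_cast hroot)
    have hcardR : Multiset.card (R.map (algebraMap ℝ ℂ)).roots = n - 1 := by
      have hsp := (Polynomial.splits_iff_card_roots
        (f := R.map (algebraMap ℝ ℂ))).mp (IsAlgClosed.splits _)
      rw [hsp, Polynomial.natDegree_map]
      have hmul : Q.natDegree = (X - C x₀).natDegree + R.natDegree := by
        rw [← hQR, Polynomial.natDegree_mul (Polynomial.X_sub_C_ne_zero _) hR0]
      rw [Polynomial.natDegree_X_sub_C, hQdeg] at hmul
      omega
    refine ⟨?_, ?_, ?_⟩
    · unfold countIn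
      rw [hmap, hrootsQ]
      have key : Multiset.card (Multiset.filter (fun z => z ∈ {z : ℂ | z.im = 0})
          (((x₀ : ℝ) : ℂ) ::ₘ (R.map (algebraMap ℝ ℂ)).roots)) = 1 := by
        rw [Multiset.filter_cons_of_pos _ (by simp),
          Multiset.filter_eq_nil.mpr (by
            intro z hz hmem
            exact hRim z hz (by simpa using hmem))]
        simp
      convert key using 2
    · unfold countIn
      rw [hmap, hrootsQ]
      have key : Multiset.card (Multiset.filter (fun z => z ∈ {z : ℂ | z.im = 0 ∧ z.re < 0})
          (((x₀ : ℝ) : ℂ) ::ₘ (R.map (algebraMap ℝ ℂ)).roots)) = 1 := by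
        rw [Multiset.filter_cons_of_pos _ (by exact ⟨Complex.ofReal_im x₀, by simpa using hx₀neg⟩),
          Multiset.filter_eq_nil.mpr (by
            intro z hz hmem
            have h' : z.im = 0 ∧ z.re < 0 := hmem
            exact hRim z hz h'.1)]
        simp
      convert key using 2
      exact @Multiset.filter_congr ℂ _ _ (fun a => Classical.propDecidable _)
        (fun a => inferInstance) _ (fun _ _ => Iff.rfl)
    · unfold countIn
      rw [hmap, hrootsQ]
      have key : Multiset.card (Multiset.filter (fun z => z ∈ {z : ℂ | z.im ≠ 0})
          (((x₀ : ℝ) : ℂ) ::ₘ (R.map (algebraMap ℝ ℂ)).roots)) = n - 1 := by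
        rw [Multiset.filter_cons_of_neg _ (by simp),
          Multiset.filter_eq_self.mpr (by
            intro z hz
            exact hRim z hz)]
        exact hcardR
      convert key using 2
      exact @Multiset.filter_congr ℂ _ _ (fun a => Classical.propDecidable _)
        (fun a => inferInstance) _ (fun _ _ => Iff.rfl)
end

section
/- Let n ≥ 1 be an integer and let b, c ∈ ℝ with c > 0. If b > c + n, then all n zeros of F(−n, b; c; z) are real and lie in the open interval (0, 1). If b < −n, then all n zeros of F(−n, b; c; z) are real and negative. -/
set_option maxHeartbeats 2000000

open Polynomial Set Filter Topology
open scoped Classical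

noncomputable def Dstep (A B : ℝ) (p : ℝ[X]) : ℝ[X] :=
  (C A * (1 - X) - C B * X) * p + X * (1 - X) * derivative p

noncomputable def Lop (u v w : ℝ) (p : ℝ[X]) : ℝ[X] :=
  X * (1 - X) * derivative (derivative p) + (C u - C v * X) * derivative p + C w * p

lemma LD_comm (b c ν κ : ℝ) (p : ℝ[X]) :
    Lop (c + ν - (κ+1)) (b + ν - 2*(κ+1) + 1) ((κ+1) * (b + ν - (κ+1)))
      (Dstep (c + ν - 1 - κ) (b - c - κ) p)
    = Dstep (c + ν - 1 - κ) (b - c - κ)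
        (Lop (c + ν - κ) (b + ν - 2*κ + 1) (κ * (b + ν - κ)) p) := by
  simp only [Lop, Dstep, derivative_add, derivative_mul, derivative_sub, derivative_C,
    derivative_X, derivative_one, derivative_zero, derivative_ofNat, C_add, C_sub, C_mul, C_1, map_ofNat]
  ring

noncomputable def pfam (n : ℕ) (b c : ℝ) : ℕ → ℝ[X]
  | 0 => 1
  | (k+1) => Dstep (c + (n:ℝ) - 1 - (k:ℝ)) (b - c - (k:ℝ)) (pfam n b c k)

lemma pfam_ode (n : ℕ) (b c : ℝ) (k : ℕ) :
    Lop (c + (n:ℝ) - (k:ℝ)) (b + (n:ℝ) - 2*(k:ℝ) + 1) ((k:ℝ) * (b + (n:ℝ) - (k:ℝ)))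
      (pfam n b c k) = 0 := by
  induction k with
  | zero =>
      simp [pfam, Lop]
  | succ k ih =>
      have h := LD_comm b c (n:ℝ) (k:ℝ) (pfam n b c k)
      rw [ih] at h
      have h2 : Dstep (c + (n:ℝ) - 1 - (k:ℝ)) (b - c - (k:ℝ)) (0 : ℝ[X]) = 0 := by
        simp [Dstep]
      rw [h2] at h
      have e : pfam n b c (k+1) = Dstep (c + (n:ℝ) - 1 - (k:ℝ)) (b - c - (k:ℝ)) (pfam n b c k) := rfl
      rw [e]
      convert h using 2 <;> push_cast <;> ring

lemma pfam_ode_n (n : ℕ) (b c : ℝ) :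
    Lop c (b - (n:ℝ) + 1) ((n:ℝ) * b) (pfam n b c n) = 0 := by
  have h := pfam_ode n b c n
  convert h using 2 <;> ring

lemma coeff_Lop (u v w : ℝ) (p : ℝ[X]) (m : ℕ) :
    (Lop u v w p).coeff m
      = ((m:ℝ)+1)*((m:ℝ)+u) * p.coeff (m+1)
        + (w - ((m:ℝ)-1)*(m:ℝ) - v*(m:ℝ)) * p.coeff m := by
  have hrw : Lop u v w p
      = X * derivative (derivative p) - X * (X * derivative (derivative p))
        + C u * derivative p - C v * (X * derivative p) + C w * p := by
    unfold Lop; ring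
  rw [hrw]
  rcases m with _ | m
  · simp only [coeff_add, coeff_sub, mul_coeff_zero, coeff_X_zero, coeff_C_mul, coeff_derivative,
      zero_mul, coeff_zero, coeff_C_zero]
    push_cast; ring
  · rcases m with _ | m
    · simp [coeff_X_mul, mul_coeff_zero, coeff_derivative]
      push_cast; ring
    · simp [coeff_X_mul, coeff_derivative]
      push_cast; ring

noncomputable def hcoef (n : ℕ) (b c : ℝ) (k : ℕ) : ℝ :=
  ((ascPochhammer ℝ k).eval (-(n : ℝ)) * (ascPochhammer ℝ k).eval b) /
    ((ascPochhammer ℝ k).eval c * (Nat.factorial k : ℝ))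

noncomputable def realHyp (n : ℕ) (b c : ℝ) : ℝ[X] :=
  ∑ k ∈ Finset.range (n + 1), C (hcoef n b c k) * X ^ k

lemma asc_eval_pos {c : ℝ} (hc : 0 < c) (k : ℕ) : 0 < (ascPochhammer ℝ k).eval c := by
  induction k with
  | zero => simp
  | succ k ih =>
      rw [ascPochhammer_succ_eval]
      positivity

lemma asc_eval_ne_zero {x : ℝ} (k : ℕ) (h : ∀ i : ℕ, i < k → x + i ≠ 0) :
    (ascPochhammer ℝ k).eval x ≠ 0 := by
  induction k with
  | zero => simp
  | succ k ih =>
      rw [ascPochhammer_succ_eval]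
      exact mul_ne_zero (ih fun i hi => h i (by omega)) (h k (by omega))

lemma hcoef_rec (n : ℕ) (b c : ℝ) (hc : 0 < c) (m : ℕ) :
    ((m:ℝ)+1)*((m:ℝ)+c) * hcoef n b c (m+1)
      = ((m:ℝ)-(n:ℝ))*((m:ℝ)+b) * hcoef n b c m := by
  unfold hcoef
  rw [ascPochhammer_succ_eval, ascPochhammer_succ_eval, ascPochhammer_succ_eval,
    Nat.factorial_succ]
  have h1 : (ascPochhammer ℝ m).eval c ≠ 0 := (asc_eval_pos hc m).ne'
  have h2 : ((m.factorial : ℝ)) ≠ 0 := Nat.cast_ne_zero.2 m.factorial_ne_zero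
  field_simp
  push_cast
  ring

lemma coeff_realHyp (n : ℕ) (b c : ℝ) (m : ℕ) :
    (realHyp n b c).coeff m = hcoef n b c m := by
  unfold realHyp
  rw [finset_sum_coeff]
  by_cases hm : m ≤ n
  · rw [Finset.sum_eq_single m]
    · simp
    · intro j _ hj
      simp only [coeff_C_mul, coeff_X_pow]
      rw [if_neg (fun h => hj h.symm)]
      ring
    · intro h; exact absurd (Finset.mem_range.2 (by omega)) h
  · have hz : hcoef n b c m = 0 := by
      unfold hcoef
      have : (ascPochhammer ℝ m).eval (-(n:ℝ)) = 0 := by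
        have hle : n + 1 ≤ m := by omega
        clear hm
        induction m with
        | zero => omega
        | succ m ih =>
            rw [ascPochhammer_succ_eval]
            rcases Nat.lt_or_ge n (m+1) with h | h
            · rcases Nat.eq_or_lt_of_le hle with he | hlt
              · have : m = n := by omega
                subst this
                simp
              · rw [ih (by omega)]; ring
            · omega
      rw [this]; simp
    rw [hz]
    apply Finset.sum_eq_zero
    intro j hj
    have hjm : j ≠ m := by simp at hj; omega
    simp only [coeff_C_mul, coeff_X_pow]
    rw [if_neg (fun h => hjm h.symm)]
    ring

lemma pfam_eval_zero (n : ℕ) (b c : ℝ) (k : ℕ) :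
    (pfam n b c k).eval 0 = (ascPochhammer ℝ k).eval (c + (n:ℝ) - (k:ℝ)) := by
  induction k with
  | zero => simp [pfam]
  | succ k ih =>
      have e : pfam n b c (k+1) = Dstep (c + (n:ℝ) - 1 - (k:ℝ)) (b - c - (k:ℝ)) (pfam n b c k) := rfl
      rw [e]
      have : (ascPochhammer ℝ (k+1)).eval (c + (n:ℝ) - ((k:ℕ)+1:ℕ)) =
          (c + (n:ℝ) - 1 - (k:ℝ)) * (ascPochhammer ℝ k).eval (c + (n:ℝ) - (k:ℝ)) := by
        rw [ascPochhammer_succ_left, eval_mul, eval_X, eval_comp]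
        push_cast
        norm_num
        ring_nf
      rw [this, ← ih]
      simp [Dstep]

lemma pfam_eq (n : ℕ) (b c : ℝ) (hc : 0 < c) :
    pfam n b c n = C ((ascPochhammer ℝ n).eval c) * realHyp n b c := by
  set γ := (ascPochhammer ℝ n).eval c with hγ
  have key : ∀ m : ℕ, (pfam n b c n).coeff m = γ * hcoef n b c m := by
    intro m
    induction m with
    | zero =>
        have h0 : (pfam n b c n).coeff 0 = γ := by
          rw [Polynomial.coeff_zero_eq_eval_zero, pfam_eval_zero]
          norm_num
          exact hγ.symm
        rw [h0]
        have : hcoef n b c 0 = 1 := by unfold hcoef; simp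
        rw [this, mul_one]
    | succ m ih =>
        have hrec : ((m:ℝ)+1)*((m:ℝ)+c) * (pfam n b c n).coeff (m+1)
            = ((m:ℝ)-(n:ℝ))*((m:ℝ)+b) * (pfam n b c n).coeff m := by
          have h := congrArg (fun q => Polynomial.coeff q m) (pfam_ode_n n b c)
          simp only [coeff_Lop, Polynomial.coeff_zero] at h
          linarith [h]
        have hne : ((m:ℝ)+1)*((m:ℝ)+c) ≠ 0 := by positivity
        apply mul_left_cancel₀ hne
        rw [hrec, ih]
        have h2 := hcoef_rec n b c hc m
        linear_combination (-γ) * h2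
  ext m
  rw [key m, Polynomial.coeff_C_mul, coeff_realHyp]



lemma eval_Dstep (A B x : ℝ) (p : ℝ[X]) :
    eval x (Dstep A B p) = (A*(1-x) - B*x) * eval x p + x*(1-x) * eval x (derivative p) := by
  simp [Dstep]

lemma hasDerivAt_w1 (A B : ℝ) (p : ℝ[X]) {x : ℝ} (h0 : 0 < x) (h1 : x < 1) :
    HasDerivAt (fun t => t ^ A * (1 - t) ^ B * eval t p)
      (x ^ (A-1) * (1-x) ^ (B-1) * eval x (Dstep A B p)) x := by
  have hx : x ≠ 0 := h0.ne'
  have h1x : (0:ℝ) < 1 - x := by linarith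
  have d1 : HasDerivAt (fun t : ℝ => t ^ A) (A * x ^ (A-1)) x :=
    Real.hasDerivAt_rpow_const (Or.inl hx)
  have inner : HasDerivAt (fun t : ℝ => 1 - t) (-1) x := by
    simpa using (hasDerivAt_id x).const_sub 1
  have douter : HasDerivAt (fun s : ℝ => s ^ B) (B * (1-x) ^ (B-1)) (1 - x) :=
    Real.hasDerivAt_rpow_const (Or.inl h1x.ne')
  have d2 : HasDerivAt (fun t : ℝ => (1 - t) ^ B) (B * (1-x) ^ (B-1) * (-1)) x :=
    HasDerivAt.comp x douter inner
  have d3 : HasDerivAt (fun t : ℝ => eval t p) (eval x (derivative p)) x := p.hasDerivAt x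
  have := (d1.mul d2).mul d3
  refine this.congr_deriv (Eq.symm ?_)
  rw [Pi.mul_apply]
  have e1 : x ^ A = x ^ (A-1) * x := by
    rw [← Real.rpow_add_one hx (A-1)]; norm_num
  have e2 : (1-x) ^ B = (1-x) ^ (B-1) * (1-x) := by
    rw [← Real.rpow_add_one h1x.ne' (B-1)]; norm_num
  rw [eval_Dstep, e1, e2]
  ring

lemma hasDerivAt_w2 (A B : ℝ) (p : ℝ[X]) {x : ℝ} (h0 : x < 0) :
    HasDerivAt (fun t => (-t) ^ A * (1 - t) ^ B * eval t p)
      (-((-x) ^ (A-1) * (1-x) ^ (B-1) * eval x (Dstep A B p))) x := by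
  have hx : (0:ℝ) < -x := by linarith
  have h1x : (0:ℝ) < 1 - x := by linarith
  have douter1 : HasDerivAt (fun s : ℝ => s ^ A) (A * (-x) ^ (A-1)) (-x) :=
    Real.hasDerivAt_rpow_const (Or.inl hx.ne')
  have inner1 : HasDerivAt (fun t : ℝ => -t) (-1) x := by
    exact hasDerivAt_neg x
  have d1 : HasDerivAt (fun t : ℝ => (-t) ^ A) (A * (-x) ^ (A-1) * (-1)) x :=
    HasDerivAt.comp x douter1 inner1
  have inner2 : HasDerivAt (fun t : ℝ => 1 - t) (-1) x := by
    simpa using (hasDerivAt_id x).const_sub 1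
  have douter2 : HasDerivAt (fun s : ℝ => s ^ B) (B * (1-x) ^ (B-1)) (1 - x) :=
    Real.hasDerivAt_rpow_const (Or.inl h1x.ne')
  have d2 : HasDerivAt (fun t : ℝ => (1 - t) ^ B) (B * (1-x) ^ (B-1) * (-1)) x :=
    HasDerivAt.comp x douter2 inner2
  have d3 : HasDerivAt (fun t : ℝ => eval t p) (eval x (derivative p)) x := p.hasDerivAt x
  have := (d1.mul d2).mul d3
  refine this.congr_deriv (Eq.symm ?_)
  rw [Pi.mul_apply]
  have e1 : (-x) ^ A = (-x) ^ (A-1) * (-x) := by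
    rw [← Real.rpow_add_one hx.ne' (A-1)]; norm_num
  have e2 : (1-x) ^ B = (1-x) ^ (B-1) * (1-x) := by
    rw [← Real.rpow_add_one h1x.ne' (B-1)]; norm_num
  rw [eval_Dstep, e1, e2]
  ring

lemma tendsto_w1_zero (A B : ℝ) (p : ℝ[X]) (hA : 0 < A) :
    Tendsto (fun t => t ^ A * (1 - t) ^ B * eval t p) (𝓝[>] (0:ℝ)) (𝓝 0) := by
  have t1 : Tendsto (fun t : ℝ => t ^ A) (𝓝[>] (0:ℝ)) (𝓝 0) := by
    have h := (Real.continuousAt_rpow_const 0 A (Or.inr hA.le)).tendsto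
    rw [Real.zero_rpow hA.ne'] at h
    exact h.mono_left nhdsWithin_le_nhds
  have hc : ContinuousAt (fun t : ℝ => (1 - t) ^ B * eval t p) 0 := by
    apply ContinuousAt.mul
    · exact (Real.continuousAt_rpow_const _ B (Or.inl (by norm_num))).comp (by fun_prop)
    · exact (Polynomial.continuous p).continuousAt
  have t2 := (hc.tendsto).mono_left (nhdsWithin_le_nhds (s := Set.Ioi (0:ℝ)))
  have h := t1.mul t2
  rw [zero_mul] at h
  simpa [mul_assoc] using h

lemma tendsto_w1_one (A B : ℝ) (p : ℝ[X]) (hB : 0 < B) :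
    Tendsto (fun t => t ^ A * (1 - t) ^ B * eval t p) (𝓝[<] (1:ℝ)) (𝓝 0) := by
  have t1 : Tendsto (fun t : ℝ => (1 - t) ^ B) (𝓝[<] (1:ℝ)) (𝓝 0) := by
    have houter := (Real.continuousAt_rpow_const 0 B (Or.inr hB.le)).tendsto
    rw [Real.zero_rpow hB.ne'] at houter
    have hinner : Tendsto (fun t : ℝ => 1 - t) (𝓝[<] (1:ℝ)) (𝓝 0) := by
      apply Tendsto.mono_left _ nhdsWithin_le_nhds
      have : ContinuousAt (fun t : ℝ => 1 - t) 1 := by fun_prop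
      simpa using this.tendsto
    exact houter.comp hinner
  have hc : ContinuousAt (fun t : ℝ => t ^ A * eval t p) 1 := by
    apply ContinuousAt.mul
    · exact Real.continuousAt_rpow_const 1 A (Or.inl one_ne_zero)
    · exact (Polynomial.continuous p).continuousAt
  have t2 := (hc.tendsto).mono_left (nhdsWithin_le_nhds (s := Set.Iio (1:ℝ)))
  have h := t1.mul t2
  rw [zero_mul] at h
  have : (fun t : ℝ => (1-t) ^ B * (t ^ A * eval t p))
      = fun t : ℝ => t ^ A * (1 - t) ^ B * eval t p := by
    funext t; ring
  rwa [this] at h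

lemma tendsto_w2_zero (A B : ℝ) (p : ℝ[X]) (hA : 0 < A) :
    Tendsto (fun t => (-t) ^ A * (1 - t) ^ B * eval t p) (𝓝[<] (0:ℝ)) (𝓝 0) := by
  have t1 : Tendsto (fun t : ℝ => (-t) ^ A) (𝓝[<] (0:ℝ)) (𝓝 0) := by
    have houter := (Real.continuousAt_rpow_const 0 A (Or.inr hA.le)).tendsto
    rw [Real.zero_rpow hA.ne'] at houter
    have hinner : Tendsto (fun t : ℝ => -t) (𝓝[<] (0:ℝ)) (𝓝 0) := by
      apply Tendsto.mono_left _ nhdsWithin_le_nhds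
      have : ContinuousAt (fun t : ℝ => -t) 0 := by fun_prop
      simpa using this.tendsto
    exact houter.comp hinner
  have hc : ContinuousAt (fun t : ℝ => (1 - t) ^ B * eval t p) 0 := by
    apply ContinuousAt.mul
    · exact (Real.continuousAt_rpow_const _ B (Or.inl (by norm_num))).comp (by fun_prop)
    · exact (Polynomial.continuous p).continuousAt
  have t2 := (hc.tendsto).mono_left (nhdsWithin_le_nhds (s := Set.Iio (0:ℝ)))
  have h := t1.mul t2
  rw [zero_mul] at h
  simpa [mul_assoc] using h

lemma tendsto_w2_atBot_pair (s t : ℝ) (hs : 0 ≤ s) (hst : s + t < 0) :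
    Tendsto (fun x : ℝ => (-x) ^ s * (1 - x) ^ t) atBot (𝓝 0) := by
  have hg : Tendsto (fun x : ℝ => (1 - x) ^ (s + t)) atBot (𝓝 0) := by
    have h1 : Tendsto (fun x : ℝ => 1 - x) atBot atTop := by
      simpa [sub_eq_add_neg] using tendsto_atTop_add_const_left atBot (1:ℝ)
        (tendsto_neg_atBot_atTop (G := ℝ))
    have h2 : Tendsto (fun y : ℝ => y ^ (s+t)) atTop (𝓝 0) := by
      have := tendsto_rpow_neg_atTop (y := -(s+t)) (by linarith)
      simpa using this
    exact h2.comp h1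
  apply squeeze_zero' (g := fun x : ℝ => (1 - x) ^ (s + t))
  · filter_upwards [eventually_lt_atBot (0:ℝ)] with x hx
    exact mul_nonneg (Real.rpow_nonneg (by linarith) s) (Real.rpow_nonneg (by linarith) t)
  · filter_upwards [eventually_lt_atBot (0:ℝ)] with x hx
    have h1x : (0:ℝ) < 1 - x := by linarith
    have hb : (-x) ^ s ≤ (1 - x) ^ s :=
      Real.rpow_le_rpow (by linarith) (by linarith) hs
    calc (-x) ^ s * (1-x) ^ t ≤ (1-x) ^ s * (1-x) ^ t :=
          mul_le_mul_of_nonneg_right hb (Real.rpow_nonneg h1x.le t)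
      _ = (1-x) ^ (s+t) := (Real.rpow_add h1x s t).symm
  · exact hg

lemma tendsto_w2_atBot (A B : ℝ) (p : ℝ[X]) (hA : 0 ≤ A)
    (h : A + (p.natDegree : ℝ) + B < 0) :
    Tendsto (fun t => (-t) ^ A * (1 - t) ^ B * eval t p) atBot (𝓝 0) := by
  set d := p.natDegree with hd
  have key : Tendsto (fun x : ℝ => ∑ j ∈ Finset.range (d+1),
      (p.coeff j * (-1:ℝ) ^ j) * ((-x) ^ (A + j) * (1 - x) ^ B)) atBot (𝓝 0) := by
    have := tendsto_finset_sum (Finset.range (d+1))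
      (f := fun j (x : ℝ) => (p.coeff j * (-1:ℝ) ^ j) * ((-x) ^ (A + j) * (1 - x) ^ B))
      (fun j hj => by
        have hj' : j ≤ d := by simpa [Nat.lt_succ_iff] using hj
        have := (tendsto_w2_atBot_pair (A + j) B (by positivity)
          (by have hjd : (j:ℝ) ≤ (d:ℝ) := by exact_mod_cast hj'
              linarith)).const_mul
          (p.coeff j * (-1:ℝ) ^ j)
        simpa using this)
    simpa using this
  apply key.congr'
  filter_upwards [eventually_lt_atBot (0:ℝ)] with x hx
  have hnx : (0:ℝ) < -x := by linarith
  rw [Polynomial.eval_eq_sum_range, Finset.mul_sum]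
  apply Finset.sum_congr rfl
  intro j hj
  have e1 : x ^ j = (-1:ℝ) ^ j * (-x) ^ j := by
    rw [← mul_pow]; norm_num
  have e2 : (-x) ^ (A + j) = (-x) ^ A * (-x) ^ j := by
    rw [Real.rpow_add hnx, Real.rpow_natCast]
  rw [e2, e1]
  ring

lemma chainStep {f g : ℝ → ℝ}
    (hfg : ∀ u ∈ Set.Ioo (0:ℝ) 1, HasDerivAt f (g u) u)
    (h0 : Tendsto f (𝓝[>] (0:ℝ)) (𝓝 0))
    (h1 : Tendsto f (𝓝[<] (1:ℝ)) (𝓝 0))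
    {k : ℕ} (x : Fin k → ℝ) (hx : StrictMono x)
    (hmem : ∀ i, x i ∈ Set.Ioo (0:ℝ) 1) (hz : ∀ i, f (x i) = 0) :
    ∃ y : Fin (k+1) → ℝ, StrictMono y ∧ (∀ i, y i ∈ Set.Ioo (0:ℝ) 1) ∧ ∀ i, g (y i) = 0 := by
  set a : Fin (k+1) → ℝ :=
    fun j => if h : 0 < (j:ℕ) then x ⟨(j:ℕ)-1, by have := j.isLt; omega⟩ else 0 with ha
  set b : Fin (k+1) → ℝ :=
    fun j => if h : (j:ℕ) < k then x ⟨(j:ℕ), h⟩ else 1 with hb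
  have hab : ∀ j, a j < b j := by
    intro j
    simp only [ha, hb]
    by_cases hj0 : 0 < (j:ℕ)
    · rw [dif_pos hj0]
      by_cases hjk : (j:ℕ) < k
      · rw [dif_pos hjk]
        exact hx (by rw [Fin.mk_lt_mk]; omega)
      · rw [dif_neg hjk]
        exact (hmem _).2
    · rw [dif_neg hj0]
      by_cases hjk : (j:ℕ) < k
      · rw [dif_pos hjk]; exact (hmem _).1
      · rw [dif_neg hjk]; norm_num
  have hsub : ∀ j, Ioo (a j) (b j) ⊆ Ioo (0:ℝ) 1 := by
    intro j z hzm
    constructor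
    · refine lt_of_le_of_lt ?_ hzm.1
      simp only [ha]
      by_cases hj0 : 0 < (j:ℕ)
      · rw [dif_pos hj0]; exact (hmem _).1.le
      · rw [dif_neg hj0]
    · refine lt_of_lt_of_le hzm.2 ?_
      simp only [hb]
      by_cases hjk : (j:ℕ) < k
      · rw [dif_pos hjk]; exact (hmem _).2.le
      · rw [dif_neg hjk]
  have hla : ∀ j, Tendsto f (𝓝[>] (a j)) (𝓝 0) := by
    intro j
    simp only [ha]
    by_cases hj0 : 0 < (j:ℕ)
    · rw [dif_pos hj0]
      have hc := (hfg _ (hmem ⟨(j:ℕ)-1, by have := j.isLt; omega⟩)).continuousAt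
      have := hc.tendsto.mono_left
        (nhdsWithin_le_nhds (s := Set.Ioi (x ⟨(j:ℕ)-1, by have := j.isLt; omega⟩)))
      rwa [hz _] at this
    · rw [dif_neg hj0]; exact h0
  have hlb : ∀ j, Tendsto f (𝓝[<] (b j)) (𝓝 0) := by
    intro j
    simp only [hb]
    by_cases hjk : (j:ℕ) < k
    · rw [dif_pos hjk]
      have hc := (hfg _ (hmem ⟨(j:ℕ), hjk⟩)).continuousAt
      have := hc.tendsto.mono_left
        (nhdsWithin_le_nhds (s := Set.Iio (x ⟨(j:ℕ), hjk⟩)))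
      rwa [hz _] at this
    · rw [dif_neg hjk]; exact h1
  have H : ∀ j : Fin (k+1), ∃ y ∈ Ioo (a j) (b j), g y = 0 := by
    intro j
    exact exists_hasDerivAt_eq_zero' (hab j) (hla j) (hlb j)
      (fun z hzm => hfg z (hsub j hzm))
  choose y hy hgy using H
  refine ⟨y, ?_, fun j => hsub j (hy j), hgy⟩
  rw [Fin.strictMono_iff_lt_succ]
  intro i
  have e : b i.castSucc = a i.succ := by
    simp only [ha, hb, Fin.coe_castSucc, Fin.val_succ]
    rw [dif_pos (by omega : 0 < i.val + 1), dif_pos i.isLt]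
    congr 1
  calc y i.castSucc < b i.castSucc := (hy i.castSucc).2
    _ = a i.succ := e
    _ < y i.succ := (hy i.succ).1





lemma natDegree_Dstep_le (A B : ℝ) (p : ℝ[X]) : (Dstep A B p).natDegree ≤ p.natDegree + 2 := by
  unfold Dstep
  apply le_trans (natDegree_add_le _ _)
  apply max_le
  · apply le_trans natDegree_mul_le
    have h1 : (C A * (1 - X) - C B * X : ℝ[X]).natDegree ≤ 1 := by
      apply le_trans (natDegree_sub_le _ _)
      apply max_le
      · apply le_trans natDegree_mul_le
        have : ((1 - X : ℝ[X])).natDegree ≤ 1 := by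
          apply le_trans (natDegree_sub_le _ _); simp
        simp only [natDegree_C, zero_add]
        exact this
      · apply le_trans natDegree_mul_le
        simp
    omega
  · apply le_trans natDegree_mul_le
    have h2 : (X * (1 - X) : ℝ[X]).natDegree ≤ 2 := by
      apply le_trans natDegree_mul_le
      have : ((1 - X : ℝ[X])).natDegree ≤ 1 := by
        apply le_trans (natDegree_sub_le _ _); simp
      simp only [natDegree_X]
      omega
    have h3 : (derivative p).natDegree ≤ p.natDegree := le_trans (natDegree_derivative_le p) (Nat.sub_le _ _)
    omega

lemma pfam_natDegree_le (n : ℕ) (b c : ℝ) (k : ℕ) : (pfam n b c k).natDegree ≤ 2 * k := by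
  induction k with
  | zero => simp [pfam]
  | succ k ih =>
      have := natDegree_Dstep_le (c + (n:ℝ) - 1 - (k:ℝ)) (b - c - (k:ℝ)) (pfam n b c k)
      have e : pfam n b c (k+1) = Dstep (c + (n:ℝ) - 1 - (k:ℝ)) (b - c - (k:ℝ)) (pfam n b c k) := rfl
      rw [e]
      omega


lemma claim1 (n : ℕ) (b c : ℝ) (hc : 0 < c) (hb : c + n < b) :
    ∀ k, k ≤ n → ∃ x : Fin k → ℝ, StrictMono x ∧ (∀ i, x i ∈ Ioo (0:ℝ) 1) ∧
      ∀ i, eval (x i) (pfam n b c k) = 0 := by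
  intro k
  induction k with
  | zero =>
      intro _
      exact ⟨Fin.elim0, fun i => i.elim0, fun i => i.elim0, fun i => i.elim0⟩
  | succ k ih =>
      intro hk1
      obtain ⟨x, hx, hmem, hroot⟩ := ih (by omega)
      set A : ℝ := c + (n:ℝ) - 1 - (k:ℝ) with hA
      set B : ℝ := b - c - (k:ℝ) with hB
      have hkn : (k:ℝ) + 1 ≤ (n:ℝ) := by exact_mod_cast hk1
      have hApos : 0 < A := by rw [hA]; linarith
      have hBpos : 0 < B := by
        rw [hB]
        have hn0 : (0:ℝ) ≤ (n:ℝ) := Nat.cast_nonneg n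
        linarith
      have e : pfam n b c (k+1) = Dstep A B (pfam n b c k) := rfl
      have main := chainStep
        (f := fun t => t ^ A * (1 - t) ^ B * eval t (pfam n b c k))
        (g := fun t => t ^ (A-1) * (1-t) ^ (B-1) * eval t (pfam n b c (k+1)))
        (fun u hu => by
          have := hasDerivAt_w1 A B (pfam n b c k) hu.1 hu.2
          rw [← e] at this
          exact this)
        (tendsto_w1_zero A B _ hApos)
        (tendsto_w1_one A B _ hBpos)
        x hx hmem
        (fun i => by simp [hroot i])
      obtain ⟨y, hy, hymem, hgy⟩ := main
      refine ⟨y, hy, hymem, fun i => ?_⟩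
      have h := hgy i
      have h1 : (y i) ^ (A-1) * (1 - y i) ^ (B-1) ≠ 0 :=
        ne_of_gt (mul_pos (Real.rpow_pos_of_pos (hymem i).1 _)
          (Real.rpow_pos_of_pos (by have := (hymem i).2; linarith) _))
      rw [mul_assoc] at h
      rcases mul_eq_zero.1 h with h' | h'
      · exact absurd h' (Real.rpow_pos_of_pos (hymem i).1 _).ne'
      · rcases mul_eq_zero.1 h' with h'' | h''
        · exact absurd h'' (Real.rpow_pos_of_pos (by have := (hymem i).2; linarith) _).ne'
        · exact h''

lemma claim2 (n : ℕ) (b c : ℝ) (hc : 0 < c) (hb : b < -(n:ℝ)) :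
    ∀ k, k ≤ n → ∃ x : Fin k → ℝ, StrictMono x ∧ (∀ i, x i ∈ Ioo (0:ℝ) 1) ∧
      ∀ i, eval (1 - (x i)⁻¹) (pfam n b c k) = 0 := by
  intro k
  induction k with
  | zero =>
      intro _
      exact ⟨Fin.elim0, fun i => i.elim0, fun i => i.elim0, fun i => i.elim0⟩
  | succ k ih =>
      intro hk1
      obtain ⟨x, hx, hmem, hroot⟩ := ih (by omega)
      set A : ℝ := c + (n:ℝ) - 1 - (k:ℝ) with hA
      set B : ℝ := b - c - (k:ℝ) with hB
      have hkn : (k:ℝ) + 1 ≤ (n:ℝ) := by exact_mod_cast hk1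
      have hApos : 0 < A := by rw [hA]; linarith
      have hbn : b + (n:ℝ) < 0 := by linarith
      have e : pfam n b c (k+1) = Dstep A B (pfam n b c k) := rfl
      -- φ
      have hφderiv : ∀ u : ℝ, u ∈ Ioo (0:ℝ) 1 →
          HasDerivAt (fun t : ℝ => 1 - t⁻¹) ((u^2)⁻¹) u := by
        intro u hu
        have h := (hasDerivAt_inv hu.1.ne').const_sub 1
        simpa using h
      have hφneg : ∀ u : ℝ, u ∈ Ioo (0:ℝ) 1 → 1 - u⁻¹ < 0 := by
        intro u hu
        have : 1 < u⁻¹ := (one_lt_inv₀ hu.1).2 hu.2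
        linarith
      have hdeg : A + ((pfam n b c k).natDegree : ℝ) + B < 0 := by
        have hd := pfam_natDegree_le n b c k
        have : ((pfam n b c k).natDegree : ℝ) ≤ 2*k := by exact_mod_cast hd
        rw [hA, hB]; linarith
      have main := chainStep
        (f := fun t : ℝ => (-(1 - t⁻¹)) ^ A * (1 - (1 - t⁻¹)) ^ B * eval (1 - t⁻¹) (pfam n b c k))
        (g := fun t : ℝ => -((-(1 - t⁻¹)) ^ (A-1) * (1 - (1 - t⁻¹)) ^ (B-1)
          * eval (1 - t⁻¹) (pfam n b c (k+1))) * ((t:ℝ)^2)⁻¹)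
        (fun u hu => by
          have houter := hasDerivAt_w2 A B (pfam n b c k) (hφneg u hu)
          have hcomp := HasDerivAt.comp u houter (hφderiv u hu)
          rw [← e] at hcomp
          exact hcomp)
        (by -- u → 0⁺ : x → -∞
          have hφ0 : Tendsto (fun t : ℝ => 1 - t⁻¹) (𝓝[>] (0:ℝ)) atBot := by
            have h1 : Tendsto (fun t : ℝ => -t⁻¹) (𝓝[>] (0:ℝ)) atBot :=
              tendsto_neg_atTop_atBot.comp tendsto_inv_nhdsGT_zero
            have h2 := tendsto_atBot_add_const_left (𝓝[>] (0:ℝ)) (1:ℝ) h1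
            simpa [sub_eq_add_neg] using h2
          exact (tendsto_w2_atBot A B _ hApos.le hdeg).comp hφ0)
        (by -- u → 1⁻ : x → 0⁻
          have hφ1 : Tendsto (fun t : ℝ => 1 - t⁻¹) (𝓝[<] (1:ℝ)) (𝓝[<] (0:ℝ)) := by
            rw [tendsto_nhdsWithin_iff]
            constructor
            · have hcont : ContinuousAt (fun t : ℝ => 1 - t⁻¹) 1 := by
                have hi : ContinuousAt (fun t : ℝ => t⁻¹) 1 := continuousAt_inv₀ one_ne_zero
                exact continuousAt_const.sub hi
              have := hcont.tendsto.mono_left (nhdsWithin_le_nhds (s := Set.Iio (1:ℝ)))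
              simpa using this
            · have hop : Set.Ioo (0:ℝ) 1 ∈ 𝓝[<] (1:ℝ) := by
                apply mem_nhdsWithin.2
                exact ⟨Set.Ioi 0, isOpen_Ioi, by norm_num, by
                  intro z hz
                  exact ⟨hz.1, hz.2⟩⟩
              filter_upwards [hop] with u hu
              exact hφneg u hu
          exact (tendsto_w2_zero A B _ hApos).comp hφ1)
        x hx hmem
        (fun i => by simp [hroot i])
      obtain ⟨y, hy, hymem, hgy⟩ := main
      refine ⟨y, hy, hymem, fun i => ?_⟩
      have h := hgy i
      have hyneg := hφneg (y i) (hymem i)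
      have f1 : (0:ℝ) < (-(1 - (y i)⁻¹)) ^ (A-1) := Real.rpow_pos_of_pos (by linarith) _
      have f2 : (0:ℝ) < (1 - (1 - (y i)⁻¹)) ^ (B-1) := Real.rpow_pos_of_pos (by linarith) _
      have hy0 : (0:ℝ) < y i := (hymem i).1
      have f3 : ((y i)^2)⁻¹ ≠ 0 := by positivity
      have h4 : (-(1 - (y i)⁻¹)) ^ (A-1) * (1 - (1 - (y i)⁻¹)) ^ (B-1)
          * eval (1 - (y i)⁻¹) (pfam n b c (k+1)) = 0 := by
        rcases mul_eq_zero.1 h with h' | h'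
        · exact neg_eq_zero.1 h'
        · exact absurd h' f3
      rw [mul_assoc] at h4
      rcases mul_eq_zero.1 h4 with h' | h'
      · exact absurd h' f1.ne'
      · rcases mul_eq_zero.1 h' with h'' | h''
        · exact absurd h'' f2.ne'
        · exact h''


lemma final_assembly (n : ℕ) (b c : ℝ) (hcn : hcoef n b c n ≠ 0)
    (x : Fin n → ℝ) (hx : StrictMono x)
    (hroot : ∀ i, eval (x i) (realHyp n b c) = 0) :
    Multiset.card (hypPoly n b c).roots = n ∧
    ∀ z ∈ (hypPoly n b c).roots, ∃ i, z = ((x i : ℝ) : ℂ) := by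
  have hmap : hypPoly n b c = (realHyp n b c).map (algebraMap ℝ ℂ) := by
    unfold hypPoly realHyp hcoef
    rw [Polynomial.map_sum]
    apply Finset.sum_congr rfl
    intro k _
    rw [Polynomial.map_mul, Polynomial.map_C, Polynomial.map_pow, Polynomial.map_X]
    rfl
  have hdegle : (realHyp n b c).natDegree ≤ n := by
    apply Polynomial.natDegree_sum_le_of_forall_le
    intro k hk
    exact le_trans (Polynomial.natDegree_C_mul_le _ _)
      (by simpa [Nat.lt_succ_iff] using Finset.mem_range.1 hk)
  have hcoeffn : (hypPoly n b c).coeff n = ((hcoef n b c n : ℝ) : ℂ) := by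
    rw [hmap, Polynomial.coeff_map, coeff_realHyp]
    rfl
  have hne : hypPoly n b c ≠ 0 := by
    intro h
    rw [h, Polynomial.coeff_zero] at hcoeffn
    exact hcn (by exact_mod_cast hcoeffn.symm)
  have hdeg : (hypPoly n b c).natDegree ≤ n := by
    rw [hmap]
    exact le_trans Polynomial.natDegree_map_le hdegle
  set T := Multiset.map (fun i : Fin n => ((x i : ℝ) : ℂ)) Finset.univ.val with hT
  have hTcard : Multiset.card T = n := by simp [hT]
  have hinj : Function.Injective (fun i : Fin n => ((x i : ℝ) : ℂ)) := by
    intro i j h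
    exact hx.injective (Complex.ofReal_inj.1 h)
  have hTnodup : T.Nodup := Multiset.Nodup.map hinj Finset.univ.nodup
  have hzroot : ∀ i, IsRoot (hypPoly n b c) ((x i : ℝ) : ℂ) := by
    intro i
    rw [hmap]
    have e : ((x i : ℝ) : ℂ) = algebraMap ℝ ℂ (x i) := rfl
    rw [IsRoot, e, Polynomial.eval_map, Polynomial.eval₂_at_apply, hroot i, map_zero]
  have hTle : T ≤ (hypPoly n b c).roots := by
    rw [Multiset.le_iff_count]
    intro z
    by_cases hzT : z ∈ T
    · rw [Multiset.count_eq_one_of_mem hTnodup hzT, Polynomial.count_roots]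
      obtain ⟨i, _, rfl⟩ := Multiset.mem_map.1 hzT
      exact (Polynomial.rootMultiplicity_pos hne).2 (hzroot i)
    · rw [Multiset.count_eq_zero_of_notMem hzT]
      exact Nat.zero_le _
  have hcardle : Multiset.card (hypPoly n b c).roots ≤ n :=
    le_trans (Polynomial.card_roots' _) hdeg
  have heq : (hypPoly n b c).roots = T :=
    (Multiset.eq_of_le_of_card_le hTle (by rw [hTcard]; exact hcardle)).symm
  constructor
  · rw [heq, hTcard]
  · intro z hz
    rw [heq] at hz
    obtain ⟨i, _, rfl⟩ := Multiset.mem_map.1 hz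
    exact ⟨i, rfl⟩

/-- For `c > 0`: if `b > c + n` all zeros of `F(-n, b; c; z)` are real in `(0, 1)`;
if `b < -n` all zeros are real and negative. -/
theorem hypPoly_extreme_b_real_zeros (n : ℕ) (hn : 1 ≤ n) (b c : ℝ) (hc : 0 < c) :
    (c + n < b →
      Multiset.card (hypPoly n b c).roots = n ∧
      ∀ z ∈ (hypPoly n b c).roots, z.im = 0 ∧ 0 < z.re ∧ z.re < 1) ∧
    (b < -(n : ℝ) →
      Multiset.card (hypPoly n b c).roots = n ∧
      ∀ z ∈ (hypPoly n b c).roots, z.im = 0 ∧ z.re < 0) := by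
  have hn0 : (0:ℝ) ≤ (n:ℝ) := Nat.cast_nonneg n
  have hγ : (0:ℝ) < (ascPochhammer ℝ n).eval c := asc_eval_pos hc n
  constructor
  · intro hb
    obtain ⟨x, hx, hmem, hroot⟩ := claim1 n b c hc hb n le_rfl
    have hrootR : ∀ i, eval (x i) (realHyp n b c) = 0 := by
      intro i
      have h := hroot i
      rw [pfam_eq n b c hc, eval_mul, eval_C] at h
      rcases mul_eq_zero.1 h with h' | h'
      · exact absurd h' hγ.ne'
      · exact h'
    have hcn : hcoef n b c n ≠ 0 := by
      unfold hcoef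
      apply div_ne_zero
      · apply mul_ne_zero
        · apply asc_eval_ne_zero
          intro i hi
          have : (i:ℝ) < (n:ℝ) := by exact_mod_cast hi
          intro h0; linarith
        · apply asc_eval_ne_zero
          intro i hi
          have hi0 : (0:ℝ) ≤ (i:ℝ) := Nat.cast_nonneg i
          intro h0; linarith
      · exact mul_ne_zero hγ.ne' (Nat.cast_ne_zero.2 n.factorial_ne_zero)
    obtain ⟨hcard, hform⟩ := final_assembly n b c hcn x hx hrootR
    refine ⟨hcard, fun z hz => ?_⟩
    obtain ⟨i, rfl⟩ := hform z hz
    exact ⟨Complex.ofReal_im _, by simpa using (hmem i).1, by simpa using (hmem i).2⟩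
  · intro hb
    obtain ⟨u, hu, humem, hroot⟩ := claim2 n b c hc hb n le_rfl
    set x : Fin n → ℝ := fun i => 1 - (u i)⁻¹ with hxdef
    have hxneg : ∀ i, x i < 0 := by
      intro i
      have h1 : (1:ℝ) < (u i)⁻¹ := (one_lt_inv₀ (humem i).1).2 (humem i).2
      simp only [hxdef]
      linarith
    have hx : StrictMono x := by
      intro i j hij
      have h1 : 0 < u i := (humem i).1
      have h2 : u i < u j := hu hij
      have h3 : (u j)⁻¹ < (u i)⁻¹ := by
        rw [inv_lt_inv₀ (by linarith) h1]
        exact h2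
      simp only [hxdef]
      linarith
    have hrootR : ∀ i, eval (x i) (realHyp n b c) = 0 := by
      intro i
      have h := hroot i
      rw [pfam_eq n b c hc, eval_mul, eval_C] at h
      rcases mul_eq_zero.1 h with h' | h'
      · exact absurd h' hγ.ne'
      · exact h'
    have hcn : hcoef n b c n ≠ 0 := by
      unfold hcoef
      apply div_ne_zero
      · apply mul_ne_zero
        · apply asc_eval_ne_zero
          intro i hi
          have : (i:ℝ) < (n:ℝ) := by exact_mod_cast hi
          intro h0; linarith
        · apply asc_eval_ne_zero
          intro i hi
          have : (i:ℝ) < (n:ℝ) := by exact_mod_cast hi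
          intro h0; linarith
      · exact mul_ne_zero hγ.ne' (Nat.cast_ne_zero.2 n.factorial_ne_zero)
    obtain ⟨hcard, hform⟩ := final_assembly n b c hcn x hx hrootR
    refine ⟨hcard, fun z hz => ?_⟩
    obtain ⟨i, rfl⟩ := hform z hz
    exact ⟨Complex.ofReal_im _, by simpa using hxneg i⟩
end

section
/- Let n ≥ 1 be an integer and let b, c ∈ ℝ with 0 < b < c. If n is even, then all n zeros of F(−n, b; c; z) are non-real. If n is odd, then F(−n, b; c; z) has exactly one real zero, which lies in (1, ∞), and the other n − 1 zeros are non-real. -/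
open Polynomial
open scoped Classical

section HypAuxSection

open MeasureTheory intervalIntegral Set

namespace HypAux

/-- The Beta weight `t^(u-1) (1-t)^(v-1)`. -/
noncomputable def W (u v t : ℝ) : ℝ := t ^ (u - 1) * (1 - t) ^ (v - 1)

lemma W_nonneg {u v t : ℝ} (h0 : 0 ≤ t) (h1 : t ≤ 1) : 0 ≤ W u v t :=
  mul_nonneg (Real.rpow_nonneg h0 _) (Real.rpow_nonneg (by linarith) _)

lemma W_pos {u v t : ℝ} (ht : t ∈ Ioo (0:ℝ) 1) : 0 < W u v t :=
  mul_pos (Real.rpow_pos_of_pos ht.1 _) (Real.rpow_pos_of_pos (by linarith [ht.2]) _)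

lemma W_complex {u v t : ℝ} (h0 : 0 ≤ t) (h1 : t ≤ 1) :
    ((W u v t : ℝ) : ℂ) = (t : ℂ) ^ ((u : ℂ) - 1) * ((1 : ℂ) - t) ^ ((v : ℂ) - 1) := by
  rw [W, Complex.ofReal_mul, Complex.ofReal_cpow h0 (u - 1),
    Complex.ofReal_cpow (by linarith : (0:ℝ) ≤ 1 - t) (v - 1)]
  push_cast
  ring_nf

lemma intervalIntegrable_W {u v : ℝ} (hu : 0 < u) (hv : 0 < v) :
    IntervalIntegrable (W u v) volume 0 1 := by
  have hc : IntervalIntegrable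
      (fun t : ℝ => (t : ℂ) ^ ((u : ℂ) - 1) * ((1 : ℂ) - t) ^ ((v : ℂ) - 1)) volume 0 1 :=
    Complex.betaIntegral_convergent (by simpa using hu) (by simpa using hv)
  rw [intervalIntegrable_iff] at hc ⊢
  have hre : IntegrableOn
      (fun t : ℝ => ((t : ℂ) ^ ((u : ℂ) - 1) * ((1 : ℂ) - t) ^ ((v : ℂ) - 1)).re)
      (Set.uIoc (0:ℝ) 1) volume := hc.re
  refine hre.congr_fun (fun t ht => ?_) measurableSet_uIoc
  rw [Set.uIoc_of_le (by norm_num : (0:ℝ) ≤ 1)] at ht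
  dsimp only
  rw [← W_complex ht.1.le ht.2]
  simp

/-- The Beta moment integral. -/
noncomputable def Mk (u v : ℝ) (k : ℕ) : ℝ := ∫ t in (0:ℝ)..1, W u v t * t ^ k

lemma W_mul_pow {u v : ℝ} (hu : 0 < u) (k : ℕ) {t : ℝ} (h0 : 0 ≤ t) :
    W u v t * t ^ k = W (u + k) v t := by
  rcases eq_or_lt_of_le h0 with rfl | ht
  · rcases Nat.eq_zero_or_pos k with rfl | hk
    · simp [W]
    · have h1k : (1:ℝ) ≤ (k:ℝ) := by exact_mod_cast hk
      rw [W, W, Real.zero_rpow (by linarith : u + (k:ℝ) - 1 ≠ 0), zero_pow hk.ne']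
      ring
  · rw [W, W, ← Real.rpow_natCast t k, mul_right_comm, ← Real.rpow_add ht]
    ring_nf

lemma Mk_eq_beta {u v : ℝ} (hu : 0 < u) (k : ℕ) :
    Mk u v k = ∫ t in (0:ℝ)..1, W (u + k) v t := by
  refine intervalIntegral.integral_congr fun t ht => ?_
  rw [Set.uIcc_of_le (by norm_num : (0:ℝ) ≤ 1)] at ht
  exact W_mul_pow hu k ht.1

lemma intervalIntegrable_W_mul_pow {u v : ℝ} (hu : 0 < u) (hv : 0 < v) (k : ℕ) :
    IntervalIntegrable (fun t => W u v t * t ^ k) volume 0 1 := by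
  have h := intervalIntegrable_W (by positivity : (0:ℝ) < u + k) hv
  rw [intervalIntegrable_iff] at h ⊢
  refine h.congr_fun (fun t ht => ?_) measurableSet_uIoc
  rw [Set.uIoc_of_le (by norm_num : (0:ℝ) ≤ 1)] at ht
  exact (W_mul_pow hu k ht.1.le).symm

/-- Beta integral in terms of Gamma. -/
lemma betaReal {u v : ℝ} (hu : 0 < u) (hv : 0 < v) :
    ∫ t in (0:ℝ)..1, W u v t = Real.Gamma u * Real.Gamma v / Real.Gamma (u + v) := by
  have h := Complex.Gamma_mul_Gamma_eq_betaIntegral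
    (s := (u:ℂ)) (t := (v:ℂ)) (by simpa using hu) (by simpa using hv)
  have hbeta : Complex.betaIntegral (u:ℂ) (v:ℂ) = ((∫ t in (0:ℝ)..1, W u v t : ℝ) : ℂ) := by
    rw [Complex.betaIntegral, ← intervalIntegral.integral_ofReal]
    refine intervalIntegral.integral_congr fun t ht => ?_
    rw [Set.uIcc_of_le (by norm_num : (0:ℝ) ≤ 1)] at ht
    exact (W_complex ht.1 ht.2).symm
  rw [hbeta, ← Complex.ofReal_add, Complex.Gamma_ofReal, Complex.Gamma_ofReal,
    Complex.Gamma_ofReal, ← Complex.ofReal_mul, ← Complex.ofReal_mul] at h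
  have h' := Complex.ofReal_injective h
  have hG : Real.Gamma (u + v) ≠ 0 := (Real.Gamma_pos_of_pos (by linarith)).ne'
  field_simp
  linarith [h']



noncomputable def asc (x : ℝ) (k : ℕ) : ℝ := (ascPochhammer ℝ k).eval x

lemma asc_pos {x : ℝ} (hx : 0 < x) (k : ℕ) : 0 < asc x k := ascPochhammer_pos k x hx

lemma Gamma_add_nat {u : ℝ} (hu : 0 < u) (k : ℕ) :
    Real.Gamma (u + k) = asc u k * Real.Gamma u := by
  induction k with
  | zero => simp [asc]
  | succ k ih =>
    have h1 : u + ((k:ℝ) + 1) = (u + k) + 1 := by ring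
    push_cast
    rw [h1, Real.Gamma_add_one (by positivity : u + (k:ℝ) ≠ 0), ih]
    unfold asc
    rw [ascPochhammer_succ_eval]
    ring

lemma Mk_zero_pos {u v : ℝ} (hu : 0 < u) (hv : 0 < v) : 0 < Mk u v 0 := by
  have : Mk u v 0 = ∫ t in (0:ℝ)..1, W u v t := by
    refine intervalIntegral.integral_congr fun t ht => ?_
    simp [Mk]
  rw [Mk]
  refine intervalIntegral_pos_of_pos_on ?_ (fun t ht => ?_) (by norm_num)
  · exact intervalIntegrable_W_mul_pow hu hv 0
  · simpa using W_pos ht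

lemma Mk_ratio {u v : ℝ} (hu : 0 < u) (hv : 0 < v) (k : ℕ) :
    Mk u v k = asc u k / asc (u + v) k * Mk u v 0 := by
  have h0 : Mk u v 0 = Real.Gamma u * Real.Gamma v / Real.Gamma (u + v) := by
    rw [Mk_eq_beta hu 0]
    push_cast
    rw [add_zero, betaReal hu hv]
  have hk : Mk u v k = Real.Gamma (u + k) * Real.Gamma v / Real.Gamma (u + v + k) := by
    rw [Mk_eq_beta hu k, betaReal (by positivity) hv]
    ring_nf
  rw [hk, h0, Gamma_add_nat hu k, Gamma_add_nat (by positivity : (0:ℝ) < u + v) k]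
  have g1 : Real.Gamma u > 0 := Real.Gamma_pos_of_pos hu
  have g2 : Real.Gamma v > 0 := Real.Gamma_pos_of_pos hv
  have g3 : Real.Gamma (u + v) > 0 := Real.Gamma_pos_of_pos (by positivity)
  have a1 : asc (u + v) k > 0 := asc_pos (by positivity) k
  field_simp

/-- the Euler integrand -/
noncomputable def Jf (u v : ℝ) (m : ℕ) (x t : ℝ) : ℝ := W u v t * (1 - x * t) ^ m

lemma Jf_eq_sum (u v : ℝ) (m : ℕ) (x t : ℝ) :
    Jf u v m x t = ∑ k ∈ Finset.range (m + 1),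
      (m.choose k : ℝ) * (-x) ^ k * (W u v t * t ^ k) := by
  rw [Jf, show (1 : ℝ) - x * t = (-x) * t + 1 by ring, add_pow]
  rw [Finset.mul_sum]
  refine Finset.sum_congr rfl fun k hk => ?_
  rw [mul_pow]
  ring

lemma intervalIntegrable_Jf {u v : ℝ} (hu : 0 < u) (hv : 0 < v) (m : ℕ) (x : ℝ) :
    IntervalIntegrable (Jf u v m x) volume 0 1 := by
  have h : IntervalIntegrable (∑ k ∈ Finset.range (m + 1),
      fun t => (m.choose k : ℝ) * (-x) ^ k * (W u v t * t ^ k)) volume 0 1 :=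
    IntervalIntegrable.sum _ fun k _ => (intervalIntegrable_W_mul_pow hu hv k).const_mul _
  refine h.congr ?_
  intro t _
  rw [Finset.sum_apply]
  exact (Jf_eq_sum u v m x t).symm

lemma J_eq {u v : ℝ} (hu : 0 < u) (hv : 0 < v) (m : ℕ) (x : ℝ) :
    ∫ t in (0:ℝ)..1, Jf u v m x t =
      ∑ k ∈ Finset.range (m + 1), (m.choose k : ℝ) * (-x) ^ k * Mk u v k := by
  have : ∀ t, Jf u v m x t = ∑ k ∈ Finset.range (m + 1),
      (m.choose k : ℝ) * (-x) ^ k * (W u v t * t ^ k) := Jf_eq_sum u v m x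
  rw [intervalIntegral.integral_congr (fun t _ => this t),
    intervalIntegral.integral_finset_sum
      (fun k _ => (intervalIntegrable_W_mul_pow hu hv k).const_mul _)]
  refine Finset.sum_congr rfl fun k hk => ?_
  rw [intervalIntegral.integral_const_mul]
  rfl

lemma J_pos_of_even {u v : ℝ} (hu : 0 < u) (hv : 0 < v) {m : ℕ} (hm : Even m) (x : ℝ) :
    0 < ∫ t in (0:ℝ)..1, Jf u v m x t := by
  have hint := intervalIntegrable_Jf hu hv m x
  rw [intervalIntegral.integral_pos_iff_support_of_nonneg_ae' ?_ hint]
  · refine ⟨by norm_num, ?_⟩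
    have hsub : Ioo (0:ℝ) 1 \ {x⁻¹} ⊆ Function.support (Jf u v m x) ∩ Ioc 0 1 := by
      rintro t ⟨ht, htx⟩
      refine ⟨?_, Ioo_subset_Ioc_self ht⟩
      have h1 : (1 : ℝ) - x * t ≠ 0 := by
        intro hxt
        have hx0 : x ≠ 0 := by rintro rfl; simp at hxt
        apply htx
        have : x * t = 1 := by linarith
        simp only [Set.mem_singleton_iff]
        field_simp
        linarith
      exact mul_ne_zero (W_pos ht).ne' (pow_ne_zero _ h1)
    refine lt_of_lt_of_le ?_ (measure_mono hsub)
    rw [measure_diff_null (measure_singleton _)]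
    simp [Real.volume_Ioo]
  · rw [Set.uIoc_of_le (by norm_num : (0:ℝ) ≤ 1)]
    rw [Filter.EventuallyLE, ae_restrict_iff' measurableSet_Ioc]
    filter_upwards with t ht
    exact mul_nonneg (W_nonneg ht.1.le ht.2) (hm.pow_nonneg _)

lemma J_pos_of_le_one {u v : ℝ} (hu : 0 < u) (hv : 0 < v) (m : ℕ) {x : ℝ} (hx : x ≤ 1) :
    0 < ∫ t in (0:ℝ)..1, Jf u v m x t := by
  refine intervalIntegral_pos_of_pos_on (intervalIntegrable_Jf hu hv m x)
    (fun t ht => ?_) (by norm_num)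
  have : x * t < 1 := by nlinarith [ht.1, ht.2]
  exact mul_pos (W_pos ht) (pow_pos (by linarith) m)

lemma J_strictAnti {u v : ℝ} (hu : 0 < u) (hv : 0 < v) {m : ℕ} (hm : Odd m)
    {x y : ℝ} (hxy : x < y) :
    (∫ t in (0:ℝ)..1, Jf u v m y t) < ∫ t in (0:ℝ)..1, Jf u v m x t := by
  have hx := intervalIntegrable_Jf hu hv m x
  have hy := intervalIntegrable_Jf hu hv m y
  have : 0 < ∫ t in (0:ℝ)..1, (Jf u v m x t - Jf u v m y t) := by
    refine intervalIntegral_pos_of_pos_on (hx.sub hy) (fun t ht => ?_) (by norm_num)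
    have h1 : 1 - y * t < 1 - x * t := by nlinarith [ht.1]
    have h2 : (1 - y * t) ^ m < (1 - x * t) ^ m := hm.strictMono_pow h1
    have := W_pos (u := u) (v := v) ht
    rw [Jf, Jf, ← mul_sub]
    exact mul_pos this (by linarith)
  rw [intervalIntegral.integral_sub hx hy] at this
  linarith

/-- coefficient of the hypergeometric polynomial -/
noncomputable def a (n : ℕ) (b c : ℝ) (k : ℕ) : ℝ :=
  asc (-(n : ℝ)) k * asc b k / (asc c k * (Nat.factorial k : ℝ))

lemma asc_neg_nat (n k : ℕ) (hk : k ≤ n) :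
    asc (-(n : ℝ)) k = (-1) ^ k * (Nat.factorial k : ℝ) * (n.choose k : ℝ) := by
  rw [asc, ascPochhammer_eval_neg_eq_descPochhammer,
    show ((n : ℝ)) = ((n : ℕ) : ℝ) by norm_num,
    descPochhammer_eval_eq_descFactorial,
    Nat.descFactorial_eq_factorial_mul_choose]
  push_cast
  ring

lemma a_eq {n : ℕ} {b c : ℝ} (hc : 0 < c) {k : ℕ} (hk : k ≤ n) :
    a n b c k = (n.choose k : ℝ) * (-1) ^ k * (asc b k / asc c k) := by
  have h1 : asc c k ≠ 0 := (asc_pos hc k).ne'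
  have h2 : (Nat.factorial k : ℝ) ≠ 0 := by positivity
  rw [a, asc_neg_nat n k hk]
  field_simp

/-- the real hypergeometric polynomial -/
noncomputable def Q (n : ℕ) (b c : ℝ) : ℝ[X] :=
  ∑ k ∈ Finset.range (n + 1), Polynomial.C (a n b c k) * Polynomial.X ^ k

lemma Q_eval (n : ℕ) (b c : ℝ) (x : ℝ) :
    (Q n b c).eval x = ∑ k ∈ Finset.range (n + 1), a n b c k * x ^ k := by
  simp [Q, Polynomial.eval_finset_sum]

lemma Q_coeff (n : ℕ) (b c : ℝ) (k : ℕ) :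
    (Q n b c).coeff k = if k ≤ n then a n b c k else 0 := by
  rw [Q, Polynomial.finset_sum_coeff]
  simp only [Polynomial.coeff_C_mul, Polynomial.coeff_X_pow, mul_ite, mul_one, mul_zero]
  rw [Finset.sum_ite_eq]
  simp [Nat.lt_succ_iff]

/-- Euler integral representation. -/
lemma Q_eval_mul {n : ℕ} {b c : ℝ} (hb : 0 < b) (hbc : b < c) (x : ℝ) :
    (Q n b c).eval x * Mk b (c - b) 0 = ∫ t in (0:ℝ)..1, Jf b (c - b) n x t := by
  have hv : 0 < c - b := by linarith
  rw [J_eq hb hv n x, Q_eval, Finset.sum_mul]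
  refine Finset.sum_congr rfl fun k hk => ?_
  rw [Finset.mem_range, Nat.lt_succ_iff] at hk
  rw [a_eq (by linarith) hk, Mk_ratio hb hv k,
    show b + (c - b) = c by ring]
  have h1 : asc c k ≠ 0 := (asc_pos (by linarith) k).ne'
  rw [neg_pow x k]
  field_simp

lemma Q_eval_pos_of_even {n : ℕ} {b c : ℝ} (hb : 0 < b) (hbc : b < c) (hn : Even n) (x : ℝ) :
    0 < (Q n b c).eval x := by
  have hv : 0 < c - b := by linarith
  have h := J_pos_of_even hb hv hn x
  rw [← Q_eval_mul hb hbc x] at h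
  have hM := Mk_zero_pos hb hv
  nlinarith

lemma Q_eval_pos_of_le_one {n : ℕ} {b c : ℝ} (hb : 0 < b) (hbc : b < c) {x : ℝ} (hx : x ≤ 1) :
    0 < (Q n b c).eval x := by
  have hv : 0 < c - b := by linarith
  have h := J_pos_of_le_one hb hv n hx
  rw [← Q_eval_mul hb hbc x] at h
  have hM := Mk_zero_pos hb hv
  nlinarith

lemma Q_strictAnti {n : ℕ} {b c : ℝ} (hb : 0 < b) (hbc : b < c) (hn : Odd n) :
    StrictAnti fun x => (Q n b c).eval x := by
  intro x y hxy
  have hv : 0 < c - b := by linarith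
  have h := J_strictAnti hb hv hn hxy
  rw [← Q_eval_mul hb hbc x, ← Q_eval_mul hb hbc y] at h
  have hM := Mk_zero_pos hb hv
  exact lt_of_mul_lt_mul_right h hM.le

lemma a_top_eq {n : ℕ} {b c : ℝ} (hc : 0 < c) :
    a n b c n = (-1) ^ n * (asc b n / asc c n) := by
  rw [a_eq hc le_rfl, Nat.choose_self]
  norm_num

lemma Q_natDegree {n : ℕ} {b c : ℝ} (hb : 0 < b) (hbc : b < c) :
    (Q n b c).natDegree = n := by
  have hc : 0 < c := by linarith
  have h1 : (Q n b c).coeff n ≠ 0 := by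
    rw [Q_coeff, if_pos le_rfl, a_top_eq hc]
    have hbn := (asc_pos hb n).ne'
    have hcn := (asc_pos hc n).ne'
    refine mul_ne_zero ?_ (div_ne_zero hbn hcn)
    rcases Nat.even_or_odd n with he | ho
    · rw [he.neg_one_pow]; norm_num
    · rw [ho.neg_one_pow]; norm_num
  refine le_antisymm ?_ (Polynomial.le_natDegree_of_ne_zero h1)
  rw [Polynomial.natDegree_le_iff_coeff_eq_zero]
  intro m hm
  rw [Q_coeff, if_neg (by omega)]

lemma Q_ne_zero {n : ℕ} {b c : ℝ} (hb : 0 < b) (hbc : b < c) : Q n b c ≠ 0 := by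
  intro h
  have := Q_coeff n b c n
  rw [h, Polynomial.coeff_zero, if_pos le_rfl] at this
  have hc : 0 < c := by linarith
  rw [a_top_eq hc] at this
  have hbn := (asc_pos hb n).ne'
  have hcn := (asc_pos hc n).ne'
  have : ((-1:ℝ)) ^ n * (asc b n / asc c n) ≠ 0 := by
    refine mul_ne_zero ?_ (div_ne_zero hbn hcn)
    rcases Nat.even_or_odd n with he | ho
    · rw [he.neg_one_pow]; norm_num
    · rw [ho.neg_one_pow]; norm_num
  exact this (by linarith)

lemma asc_succ (x : ℝ) (k : ℕ) : asc x (k + 1) = x * asc (x + 1) k := by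
  rw [asc, asc, ascPochhammer_succ_left, Polynomial.eval_mul, Polynomial.eval_X,
    Polynomial.eval_comp, Polynomial.eval_add, Polynomial.eval_X, Polynomial.eval_one]

lemma Q_derivative {n : ℕ} (hn : 1 ≤ n) {b c : ℝ} (hb : 0 < b) (hbc : b < c) :
    Polynomial.derivative (Q n b c) =
      Polynomial.C (-((n : ℝ) * b / c)) * Q (n - 1) (b + 1) (c + 1) := by
  have hc : 0 < c := by linarith
  ext k
  rw [Polynomial.coeff_derivative, Polynomial.coeff_C_mul, Q_coeff, Q_coeff]
  by_cases hk : k ≤ n - 1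
  · rw [if_pos hk, if_pos (by omega : k + 1 ≤ n)]
    rw [a_eq hc (by omega : k + 1 ≤ n), a_eq (by linarith : (0:ℝ) < c + 1) hk]
    have hnat := Nat.add_one_mul_choose_eq (n - 1) k
    rw [Nat.sub_add_cancel hn] at hnat
    have hnat' : (k + 1) * n.choose (k + 1) = n * (n - 1).choose k := by
      rw [mul_comm]; exact hnat.symm
    have hcast : ((k : ℝ) + 1) * (n.choose (k + 1) : ℝ) = (n : ℝ) * ((n - 1).choose k : ℝ) := by
      exact_mod_cast hnat'
    rw [asc_succ b k, asc_succ c k, pow_succ]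
    have h1 : asc (c + 1) k ≠ 0 := (asc_pos (by linarith) k).ne'
    have hc0 : c ≠ 0 := hc.ne'
    field_simp
    linear_combination (-asc (b + 1) k) * hcast
  · rw [if_neg hk, if_neg (by omega : ¬ k + 1 ≤ n), zero_mul, mul_zero]

open Filter in
lemma exists_neg_eval {n : ℕ} {b c : ℝ} (hn : 1 ≤ n) (hodd : Odd n)
    (hb : 0 < b) (hbc : b < c) : ∃ x : ℝ, 1 < x ∧ (Q n b c).eval x < 0 := by
  have hc : 0 < c := by linarith
  have hdeg : (Q n b c).natDegree = n := Q_natDegree hb hbc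
  have hlc : (Q n b c).leadingCoeff < 0 := by
    rw [Polynomial.leadingCoeff, hdeg, Q_coeff, if_pos le_rfl, a_top_eq hc, hodd.neg_one_pow]
    have h1 := asc_pos hb n
    have h2 := asc_pos hc n
    have : (0:ℝ) < asc b n / asc c n := by positivity
    linarith
  have hdpos : 0 < (Q n b c).degree := by
    rw [Polynomial.degree_eq_natDegree (Q_ne_zero hb hbc), hdeg]
    exact_mod_cast hn
  have ht : Tendsto (fun x => (Q n b c).eval x) atTop atBot :=
    Polynomial.tendsto_atBot_of_leadingCoeff_nonpos _ hdpos hlc.le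
  obtain ⟨x, hx1, hx0⟩ :=
    ((eventually_gt_atTop (1:ℝ)).and (ht.eventually (eventually_lt_atBot 0))).exists
  exact ⟨x, hx1, hx0⟩

lemma exists_root_odd {n : ℕ} {b c : ℝ} (hn : 1 ≤ n) (hodd : Odd n)
    (hb : 0 < b) (hbc : b < c) :
    ∃ r : ℝ, 1 < r ∧ (Q n b c).eval r = 0 := by
  obtain ⟨x0, hx1, hx0⟩ := exists_neg_eval hn hodd hb hbc
  have h1 : 0 < (Q n b c).eval 1 := Q_eval_pos_of_le_one hb hbc le_rfl
  have hcont : ContinuousOn (fun x => (Q n b c).eval x) (Icc 1 x0) :=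
    ((Q n b c).continuous_aeval).continuousOn
  have hmem : (0:ℝ) ∈ Icc ((Q n b c).eval x0) ((Q n b c).eval 1) := ⟨hx0.le, h1.le⟩
  obtain ⟨r, hr, hr0⟩ := intermediate_value_Icc' hx1.le hcont hmem
  refine ⟨r, ?_, hr0⟩
  simp only [] at hr0
  rcases eq_or_lt_of_le hr.1 with rfl | h
  · rw [hr0] at h1; linarith
  · exact h

lemma countIn_eq_one_of {p : Polynomial ℂ} {S : Set ℂ} {r : ℂ}
    (h : ∀ z ∈ p.roots, z ∈ S ↔ z = r) (hc : p.roots.count r = 1) : countIn p S = 1 := by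
  rw [countIn, Multiset.filter_congr h, Multiset.filter_eq', Multiset.card_replicate, hc]

lemma countIn_compl {p : Polynomial ℂ} {S T : Set ℂ}
    (h : ∀ z ∈ p.roots, z ∈ T ↔ ¬ (z ∈ S)) :
    countIn p S + countIn p T = Multiset.card p.roots := by
  rw [countIn, countIn, Multiset.filter_congr h, ← Multiset.card_add,
    Multiset.filter_add_not]

lemma hypPoly_eq_map (n : ℕ) (b c : ℝ) :
    hypPoly n b c = (Q n b c).map (algebraMap ℝ ℂ) := by
  rw [hypPoly, Q, Polynomial.map_sum]
  refine Finset.sum_congr rfl fun k _ => ?_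
  rw [Polynomial.map_mul, Polynomial.map_pow, Polynomial.map_C, Polynomial.map_X]
  rfl

lemma hypPoly_eval (n : ℕ) (b c : ℝ) (x : ℝ) :
    (hypPoly n b c).eval (x : ℂ) = (((Q n b c).eval x : ℝ) : ℂ) := by
  rw [hypPoly_eq_map, Polynomial.eval_map,
    show ((x : ℂ)) = algebraMap ℝ ℂ x from rfl, Polynomial.eval₂_at_apply]
  rfl

end HypAux

end HypAuxSection

open HypAux in
/-- Zero distribution of `F(-n, b; c; z)` for `0 < b < c`. -/
theorem hypPoly_zero_lt_b_lt_c (n : ℕ) (hn : 1 ≤ n) (b c : ℝ)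
    (hb : 0 < b) (hbc : b < c) :
    (Even n →
      Multiset.card (hypPoly n b c).roots = n ∧
      ∀ z ∈ (hypPoly n b c).roots, z.im ≠ 0) ∧
    (Odd n →
      countIn (hypPoly n b c) {z | z.im = 0} = 1 ∧
      countIn (hypPoly n b c) {z | z.im = 0 ∧ 1 < z.re} = 1 ∧
      countIn (hypPoly n b c) {z | z.im ≠ 0} = n - 1) := by
  have hc : 0 < c := lt_trans hb hbc
  set p := hypPoly n b c with hp
  have hmap : p = (Q n b c).map (algebraMap ℝ ℂ) := hypPoly_eq_map n b c
  have hQne : Q n b c ≠ 0 := Q_ne_zero hb hbc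
  have hinj : Function.Injective (algebraMap ℝ ℂ) := (algebraMap ℝ ℂ).injective
  have hpne : p ≠ 0 := by
    rw [hmap]
    exact (Polynomial.map_ne_zero_iff hinj).mpr hQne
  have hdeg : p.natDegree = n := by
    rw [hmap, Polynomial.natDegree_map_eq_of_injective hinj, Q_natDegree hb hbc]
  have hcard : Multiset.card p.roots = n := by
    rw [Polynomial.splits_iff_card_roots.mp (IsAlgClosed.splits p), hdeg]
  have heval : ∀ x : ℝ, p.eval (x : ℂ) = (((Q n b c).eval x : ℝ) : ℂ) :=
    hypPoly_eval n b c
  constructor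
  · intro hev
    refine ⟨hcard, fun z hz him => ?_⟩
    have hzre : ((z.re : ℂ)) = z := Complex.ext (by simp) (by simp [him])
    have h0 : p.eval z = 0 := (Polynomial.mem_roots hpne).mp hz
    rw [← hzre, heval] at h0
    have h0' : (Q n b c).eval z.re = 0 := by exact_mod_cast h0
    exact absurd h0' (Q_eval_pos_of_even hb hbc hev z.re).ne'
  · intro hodd
    obtain ⟨r, hr1, hr0⟩ := exists_root_odd hn hodd hb hbc
    have hanti := Q_strictAnti hb hbc hodd
    have huniq : ∀ x : ℝ, (Q n b c).eval x = 0 → x = r := fun x hx =>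
      hanti.injective (show (Q n b c).eval x = (Q n b c).eval r by rw [hx, hr0])
    have hder : (Polynomial.derivative (Q n b c)).eval r ≠ 0 := by
      rw [Q_derivative hn hb hbc, Polynomial.eval_mul, Polynomial.eval_C]
      have heven : Even (n - 1) := Nat.Odd.sub_odd hodd odd_one
      have hpos2 : 0 < (Q (n - 1) (b + 1) (c + 1)).eval r :=
        Q_eval_pos_of_even (by linarith) (by linarith) heven r
      have hn' : (0:ℝ) < (n : ℝ) := by exact_mod_cast hn
      have hq : 0 < (n : ℝ) * b / c := by positivity
      intro hcon; nlinarith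
    have hroot : p.IsRoot (r : ℂ) := by
      rw [Polynomial.IsRoot, heval, hr0, Complex.ofReal_zero]
    have hder' : ¬ (Polynomial.derivative p).IsRoot (r : ℂ) := by
      rw [hmap, Polynomial.derivative_map, Polynomial.IsRoot, Polynomial.eval_map,
        show ((r : ℂ)) = algebraMap ℝ ℂ r from rfl, Polynomial.eval₂_at_apply]
      simpa using hder
    have hmult : p.rootMultiplicity (r : ℂ) = 1 := by
      have h1 : 0 < p.rootMultiplicity (r : ℂ) :=
        (Polynomial.rootMultiplicity_pos hpne).mpr hroot
      have h2 : ¬ 1 < p.rootMultiplicity (r : ℂ) := by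
        rw [Polynomial.one_lt_rootMultiplicity_iff_isRoot hpne]
        rintro ⟨-, hcon⟩; exact hder' hcon
      omega
    have hcount : p.roots.count (r : ℂ) = 1 := by
      rw [Polynomial.count_roots]; exact hmult
    have hkey : ∀ z ∈ p.roots, z.im = 0 ↔ z = (r : ℂ) := by
      intro z hz
      constructor
      · intro him
        have hzre : ((z.re : ℂ)) = z := Complex.ext (by simp) (by simp [him])
        have h0 : p.eval z = 0 := (Polynomial.mem_roots hpne).mp hz
        rw [← hzre, heval] at h0
        have h0' : (Q n b c).eval z.re = 0 := by exact_mod_cast h0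
        rw [← hzre, huniq z.re h0']
      · rintro rfl; simp
    have hcard1 : countIn p {z : ℂ | z.im = 0} = 1 :=
      countIn_eq_one_of (fun z hz => by simpa using hkey z hz) hcount
    refine ⟨hcard1, ?_, ?_⟩
    · refine countIn_eq_one_of (fun z hz => ?_) hcount
      simp only [Set.mem_setOf_eq]
      constructor
      · rintro ⟨him, -⟩; exact (hkey z hz).mp him
      · rintro rfl; exact ⟨by simp, by simpa using hr1⟩
    · have hsum := countIn_compl (p := p) (S := {z : ℂ | z.im = 0}) (T := {z : ℂ | z.im ≠ 0})
        (fun z hz => by simp [Set.mem_setOf_eq])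
      rw [hcard, hcard1] at hsum
      omega
end
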